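/- arXiv:1801.02071 — 2 statements merged into one kernel-verified Lean document; each statement's English description precedes it below -/
import Mathlib

section
/- Let L = V ⊕ W be a color gLt-algebra admitting a quasi-multiplicative basis {e_i}_{i∈I} of W ≠ 0. Suppose L is centerless, i.e. Z(L) = {x ∈ L : ⟨x, L, …, L⟩_σ = 0 for all σ ∈ Sₙ} = 0, and V is tight, i.e. V = 0 or V = Σ_{i₁,…,iₙ ∈ I, μ(i₁,…,iₙ)={v}} 𝔽⟨e_{i₁},…,e_{iₙ}⟩. Then L = ⊕_{[i]∈I/∼} 𝔍_{[i]} is the direct sum of the color gLt-ideals 𝔍_{[i]}. -/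
set_option maxHeartbeats 1000000

/-- A (color) generalized Lie-type algebra: an `(n+2)`-ary `G`-graded algebra with
bicharacter `epsilon` satisfying the (colored) generalized Lie-type identities with
structure constants `alpha` (allowed to depend on the degrees of the arguments). -/
structure ColorGLT (F : Type) [Field F] (G : Type) [AddCommGroup G] [DecidableEq G]
    (L : Type) [AddCommGroup L] [Module F L] (n : ℕ) where
  bracket : MultilinearMap F (fun _ : Fin (n + 2) => L) L
  grading : G → Submodule F L
  isInternal : DirectSum.IsInternal grading
  bracket_graded : ∀ (g : Fin (n + 2) → G) (x : Fin (n + 2) → L),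
    (∀ t, x t ∈ grading (g t)) → bracket x ∈ grading (∑ t, g t)
  epsilon : G → G → F
  epsilon_ne_zero : ∀ g h, epsilon g h ≠ 0
  epsilon_add_left : ∀ g h k, epsilon (g + h) k = epsilon g k * epsilon h k
  epsilon_add_right : ∀ g h k, epsilon k (g + h) = epsilon k g * epsilon k h
  epsilon_skew : ∀ g h, epsilon g h * epsilon h g = 1
  alpha : Fin (n + 2) → Fin (n + 2) → Fin (n + 2) → Equiv.Perm (Fin (n + 2)) →
      Equiv.Perm (Fin (n + 1)) → (Fin (n + 2) → G) → (Fin (n + 1) → G) → F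
  glt : ∀ (k : Fin (n + 2)) (gx : Fin (n + 2) → G) (gy : Fin (n + 1) → G)
      (x : Fin (n + 2) → L) (y : Fin (n + 1) → L),
      (∀ t, x t ∈ grading (gx t)) → (∀ t, y t ∈ grading (gy t)) →
      bracket (Fin.insertNth k (bracket x) y) =
        ∑ i : Fin (n + 2), ∑ j : Fin (n + 2), ∑ σ₁ : Equiv.Perm (Fin (n + 2)),
          ∑ σ₂ : Equiv.Perm (Fin (n + 1)),
            alpha i j k σ₁ σ₂ gx gy •
              bracket (Function.update (fun t => x (σ₁ t)) i
                (bracket (Fin.insertNth j (x (σ₁ i)) (fun t => y (σ₂ t)))))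

namespace ColorGLT

variable {F : Type} [Field F] {G : Type} [AddCommGroup G] [DecidableEq G]
    {L : Type} [AddCommGroup L] [Module F L] {n : ℕ}

/-- A color gLt-ideal: a graded subspace `S` with `⟨S, L, …, L⟩_σ ⊆ S` for all `σ ∈ Sₙ`. -/
def IsIdeal (A : ColorGLT F G L n) (S : Submodule F L) : Prop :=
  (S = ⨆ g : G, S ⊓ A.grading g) ∧
  ∀ (σ : Equiv.Perm (Fin (n + 2))) (x : Fin (n + 2) → L),
    x 0 ∈ S → A.bracket (fun t => x (σ t)) ∈ S

/-- `L` is centerless: `Z(L) = {x : ⟨x, L, …, L⟩_σ = 0 ∀ σ} = 0`. -/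
def Centerless (A : ColorGLT F G L n) : Prop :=
  ∀ x : L, (∀ (σ : Equiv.Perm (Fin (n + 2))) (y : Fin (n + 2) → L),
    y 0 = x → A.bracket (fun t => y (σ t)) = 0) → x = 0

end ColorGLT

/-- A quasi-multiplicative basis of a color gLt-algebra: `L = V ⊕ W`, with a homogeneous
basis `{e i}` of `W ≠ 0` satisfying the three quasi-multiplicativity conditions. -/
structure QMBasis {F : Type} [Field F] {G : Type} [AddCommGroup G] [DecidableEq G]
    {L : Type} [AddCommGroup L] [Module F L] {n : ℕ}
    (A : ColorGLT F G L n) (I : Type) where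
  V : Submodule F L
  W : Submodule F L
  compl : IsCompl V W
  W_ne_bot : W ≠ ⊥
  V_graded : V = ⨆ g : G, V ⊓ A.grading g
  W_graded : W = ⨆ g : G, W ⊓ A.grading g
  e : I → L
  deg : I → G
  e_homog : ∀ i, e i ∈ A.grading (deg i)
  e_indep : LinearIndependent F e
  e_span : Submodule.span F (Set.range e) = W
  qm1 : ∀ c : Fin (n + 2) → I,
    (∃ j, A.bracket (fun t => e (c t)) ∈ Submodule.span F {e j}) ∨
      A.bracket (fun t => e (c t)) ∈ V
  qm2 : ∀ (σ : Equiv.Perm (Fin (n + 2))) (S : Finset (Fin (n + 2))),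
    S.Nonempty → S ≠ Finset.univ → ∀ ind : Fin (n + 2) → I, ∃ j : I,
      ∀ x : Fin (n + 2) → L, (∀ t, t ∈ S → x t = e (ind t)) →
        (∀ t, t ∉ S → x t ∈ V) →
        A.bracket (fun t => x (σ t)) ∈ Submodule.span F {e j}
  qm3 : (∃ j, ∀ x : Fin (n + 2) → L, (∀ t, x t ∈ V) →
          A.bracket x ∈ Submodule.span F {e j}) ∨
        (∀ x : Fin (n + 2) → L, (∀ t, x t ∈ V) → A.bracket x ∈ V)

namespace QMBasis

variable {F : Type} [Field F] {G : Type} [AddCommGroup G] [DecidableEq G]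
    {L : Type} [AddCommGroup L] [Module F L] {n : ℕ} {I : Type}
    {A : ColorGLT F G L n}

/-- The set of elements represented by an index of `𝔉 = I ∪ {v}`: `e i` for `some i`,
the subspace `V` for `none` (= `v`). -/
def elemSet (B : QMBasis A I) : Option I → Set L
  | none => (B.V : Set L)
  | some i => {B.e i}

/-- The target set of an index of `𝔉`: the line `𝔽 e j` for `some j`, `V` for `v`. -/
def targetSet (B : QMBasis A I) : Option I → Set L
  | none => (B.V : Set L)
  | some j => (Submodule.span F {B.e j} : Set L)

/-- `x ∈ a_σ(c)`: the `σ`-permuted product of the elements represented by `c` is nonzero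
and lands in the target represented by `x`; the value `v` is only allowed for all-basis
or all-`V` tuples. -/
def aMem (B : QMBasis A I) (σ : Equiv.Perm (Fin (n + 2)))
    (c : Fin (n + 2) → Option I) (x : Option I) : Prop :=
  (∃ z : Fin (n + 2) → L, (∀ t, z t ∈ B.elemSet (c (σ t))) ∧ A.bracket z ≠ 0) ∧
  (∀ z : Fin (n + 2) → L, (∀ t, z t ∈ B.elemSet (c (σ t))) → A.bracket z ∈ B.targetSet x) ∧
  (x = none → ((∀ t, (c t).isSome = true) ∨ (∀ t, c t = none)))

/-- An admissible `(n+1)`-tuple over `𝔉 ∪ 𝔉̄`: all entries barred (`true`) or all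
unbarred (`false`). -/
abbrev Tup (I : Type) (n : ℕ) := Bool × (Fin (n + 1) → Option I)

/-- `x ∈ μ(j, X)` where `j ∈ 𝔉 ∪ 𝔉̄` (left = unbarred, right = barred) and `X` is an
admissible tuple; defined via `a_σ` and `b_σ` as in the paper. -/
def muMem (B : QMBasis A I) :
    Option I ⊕ Option I → Tup I n → Option I → Prop
  | Sum.inl j, (false, c), x => ∃ σ : Equiv.Perm (Fin (n + 2)), B.aMem σ (Fin.cons j c) x
  | Sum.inl j, (true, c), x => ∃ σ : Equiv.Perm (Fin (n + 2)), B.aMem σ (Fin.cons x c) j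
  | Sum.inr j, (false, c), x =>
      ∃ (k : Fin (n + 1)) (σ : Equiv.Perm (Fin (n + 2))),
        B.aMem σ (Fin.cons x (Fin.cons j (fun t => c (k.succAbove t)))) (c k)
  | Sum.inr _, (true, _), _ => False

/-- The map `φ : P(I ∪ Ī) × T → P(I ∪ Ī)`, `φ(J, X) = K ∪ K̄` with
`K = (⋃_{j ∈ J} μ(j, X)) \ {v}` (left = `I`, right = `Ī`). -/
def phi (B : QMBasis A I) (J : Set (I ⊕ I)) (X : Tup I n) : Set (I ⊕ I) :=
  {p | ∃ i : I, (p = Sum.inl i ∨ p = Sum.inr i) ∧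
    ∃ j ∈ J, B.muMem (Sum.map some some j) X (some i)}

/-- Iterated application of `φ` along a list of tuples. -/
def chain (B : QMBasis A I) : Set (I ⊕ I) → List (Tup I n) → Set (I ⊕ I)
  | s, [] => s
  | s, X :: r => chain B (B.phi s X) r

/-- The connection relation: `i` is connected to `j`. -/
def Connected (B : QMBasis A I) (i j : I) : Prop :=
  i = j ∨ ∃ (Xs : List (Tup I n)) (st : I ⊕ I),
    Xs ≠ [] ∧ (st = Sum.inl i ∨ st = Sum.inr i) ∧
    (∀ m, m < Xs.length → (chain B {st} (List.take m Xs)).Nonempty) ∧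
    Sum.inl j ∈ chain B {st} Xs

/-- The connection class `[i]` of `i`. -/
def cls (B : QMBasis A I) (i : I) : Set I := {j | B.Connected i j}

/-- `W_{[i]} = ⊕_{j ∈ [i]} 𝔽 e_j`. -/
def Wcls (B : QMBasis A I) (i : I) : Submodule F L :=
  Submodule.span F (B.e '' B.cls i)

/-- `V_{[i]} = (Σ_{i₁,…,iₙ ∈ [i]} 𝔽⟨e_{i₁},…,e_{iₙ}⟩) ∩ V`. -/
def Vcls (B : QMBasis A I) (i : I) : Submodule F L :=
  Submodule.span F {z : L | ∃ c : Fin (n + 2) → I,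
    (∀ t, c t ∈ B.cls i) ∧ z = A.bracket (fun t => B.e (c t))} ⊓ B.V

/-- `𝔍_{[i]} = V_{[i]} ⊕ W_{[i]}`. -/
def Jcls (B : QMBasis A I) (i : I) : Submodule F L := B.Vcls i ⊔ B.Wcls i

/-- `S` admits a quasi-multiplicative basis inherited from that of `L`:
`S = V_S ⊕ W_S` with `V_S ⊆ V` and `W_S ≠ 0` spanned by a subset of the `e i`. -/
def HasInheritedBasis (B : QMBasis A I) (S : Submodule F L) : Prop :=
  ∃ (V' : Submodule F L) (J' : Set I), V' ≤ B.V ∧ J'.Nonempty ∧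
    S = V' ⊔ Submodule.span F (B.e '' J')

/-- `V` is tight: `V = 0` or `V = Σ_{μ(i₁,…,iₙ) = {v}} 𝔽⟨e_{i₁},…,e_{iₙ}⟩`. -/
def Tight (B : QMBasis A I) : Prop :=
  B.V = ⊥ ∨
    B.V = Submodule.span F {z : L | ∃ c : Fin (n + 2) → I,
      ({x : Option I | ∃ σ, B.aMem σ (fun t => some (c t)) x} = {none}) ∧
      z = A.bracket (fun t => B.e (c t))}

/-- The set of elements represented by `u_{k}`: `u_k = e_k + e_{k̄}` (`= e` of the
underlying index, since `e_{j̄} = 0`) if `k ∉ {v, v̄}`, and `u_k = V` otherwise. -/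
def uSet (B : QMBasis A I) : Option I ⊕ Option I → Set L
  | Sum.inl none => (B.V : Set L)
  | Sum.inr none => (B.V : Set L)
  | Sum.inl (some i) => {B.e i}
  | Sum.inr (some i) => {B.e i}

/-- The full `(n+2)`-tuple `(k₁, …, kₙ)` over `𝔉 ∪ 𝔉̄` obtained from a first entry and
an admissible tuple. -/
def fullTup {I : Type} {n : ℕ} (k₁ : Option I ⊕ Option I) (X : Tup I n) :
    Fin (n + 2) → Option I ⊕ Option I :=
  Fin.cons k₁ (fun t => if X.1 then Sum.inr (X.2 t) else Sum.inl (X.2 t))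

/-- The basis is `μ`-quasi-multiplicative: whenever `i ∈ μ(k₁, …, kₙ)` then
`e i ∈ 𝔽⟨u_{k₁}, …, u_{kₙ}⟩_σ` for some `σ ∈ Sₙ`. -/
def MuQM (B : QMBasis A I) : Prop :=
  ∀ (k₁ : Option I ⊕ Option I) (X : Tup I n) (i : I),
    B.muMem k₁ X (some i) →
    ∃ (σ : Equiv.Perm (Fin (n + 2))) (z : Fin (n + 2) → L),
      (∀ t, z t ∈ B.uSet (fullTup k₁ X (σ t))) ∧
      B.e i ∈ Submodule.span F {A.bracket z}

end QMBasis
namespace QMBasis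
variable {F : Type} [Field F] {G : Type} [AddCommGroup G] [DecidableEq G]
    {L : Type} [AddCommGroup L] [Module F L] {n : ℕ} {I : Type}
    {A : ColorGLT F G L n}

open Function

lemma aMem_congr (B : QMBasis A I) {σ : Equiv.Perm (Fin (n+2))} {c : Fin (n+2) → Option I}
    {x : Option I} (c' : Fin (n+2) → Option I) (π : Equiv.Perm (Fin (n+2)))
    (hcc : ∀ t, c' t = c (π t)) (h : B.aMem σ c x) : ∃ σ', B.aMem σ' c' x := by
  have key : ∀ t, c' ((σ.trans π.symm) t) = c (σ t) := fun t => by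
    simp [hcc, Equiv.trans_apply]
  refine ⟨σ.trans π.symm, ?_, ?_, ?_⟩
  · obtain ⟨z, hz, hz0⟩ := h.1
    exact ⟨z, fun t => (key t) ▸ hz t, hz0⟩
  · intro z hz
    exact h.2.1 z (fun t => (key t) ▸ hz t)
  · intro hx
    rcases h.2.2 hx with h1 | h1
    · exact Or.inl fun t => by rw [hcc]; exact h1 _
    · exact Or.inr fun t => by rw [hcc]; exact h1 _

lemma phi_mono (B : QMBasis A I) {J J' : Set (I ⊕ I)} (h : J ⊆ J') (X : Tup I n) :
    B.phi J X ⊆ B.phi J' X := by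
  rintro p ⟨i, hi, j, hj, hmu⟩
  exact ⟨i, hi, j, h hj, hmu⟩

lemma chain_mono (B : QMBasis A I) {J J' : Set (I ⊕ I)} (h : J ⊆ J') (Xs : List (Tup I n)) :
    B.chain J Xs ⊆ B.chain J' Xs := by
  induction Xs generalizing J J' with
  | nil => exact h
  | cons X r ih => exact ih (B.phi_mono h X)

lemma chain_append (B : QMBasis A I) (J : Set (I ⊕ I)) (Xs Ys : List (Tup I n)) :
    B.chain J (Xs ++ Ys) = B.chain (B.chain J Xs) Ys := by
  induction Xs generalizing J with
  | nil => rfl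
  | cons X r ih => simpa [chain] using ih (B.phi J X)

lemma mem_phi_iff (B : QMBasis A I) {J : Set (I ⊕ I)} {X : Tup I n} {p : I ⊕ I} :
    p ∈ B.phi J X ↔ ∃ i : I, (p = Sum.inl i ∨ p = Sum.inr i) ∧
      ∃ j ∈ J, B.muMem (Sum.map some some j) X (some i) := Iff.rfl

lemma inl_mem_phi_iff_inr (B : QMBasis A I) (J : Set (I ⊕ I)) (X : Tup I n) (a : I) :
    Sum.inl a ∈ B.phi J X ↔ Sum.inr a ∈ B.phi J X := by
  constructor
  · rintro ⟨i, hi | hi, j, hj, hmu⟩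
    · obtain rfl : a = i := by injection hi
      exact ⟨a, Or.inr rfl, j, hj, hmu⟩
    · exact absurd hi (Sum.inl_ne_inr)
  · rintro ⟨i, hi | hi, j, hj, hmu⟩
    · exact absurd hi (Sum.inr_ne_inl)
    · obtain rfl : a = i := by injection hi
      exact ⟨a, Or.inl rfl, j, hj, hmu⟩

lemma inl_mem_chain_iff_inr (B : QMBasis A I) (J : Set (I ⊕ I)) {Xs : List (Tup I n)}
    (hne : Xs ≠ []) (a : I) :
    Sum.inl a ∈ B.chain J Xs ↔ Sum.inr a ∈ B.chain J Xs := by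
  rcases List.eq_nil_or_concat Xs with h | ⟨Ys, X, h⟩
  · exact absurd h hne
  · subst h
    rw [show Ys.concat X = Ys ++ [X] from List.concat_eq_append, chain_append]
    exact B.inl_mem_phi_iff_inr _ _ _

lemma mem_chain_iff (B : QMBasis A I) {J : Set (I ⊕ I)} {Xs : List (Tup I n)} {p : I ⊕ I} :
    p ∈ B.chain J Xs ↔ ∃ q ∈ J, p ∈ B.chain {q} Xs := by
  induction Xs generalizing J with
  | nil => simp [chain]
  | cons X r ih =>
    constructor
    · intro h
      rcases ih.mp h with ⟨q', hq', hp⟩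
      obtain ⟨i, hi, j, hj, hmu⟩ := hq'
      refine ⟨j, hj, ?_⟩
      have : q' ∈ B.phi {j} X := ⟨i, hi, j, rfl, hmu⟩
      exact ih.mpr ⟨q', this, hp⟩
    · rintro ⟨q, hq, hp⟩
      rcases ih.mp hp with ⟨q', hq', hp'⟩
      exact ih.mpr ⟨q', B.phi_mono (by simpa using hq) X hq', hp'⟩

lemma connected_refl (B : QMBasis A I) (i : I) : B.Connected i i := Or.inl rfl

lemma connected_trans (B : QMBasis A I) {i j k : I} (h1 : B.Connected i j)
    (h2 : B.Connected j k) : B.Connected i k := by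
  rcases h1 with rfl | ⟨Xs, st, hXs, hst, hpart, hmem⟩
  · exact h2
  rcases h2 with rfl | ⟨Ys, st', hYs, hst', hpart', hmem'⟩
  · exact Or.inr ⟨Xs, st, hXs, hst, hpart, hmem⟩
  have hst'mem : st' ∈ B.chain {st} Xs := by
    rcases hst' with rfl | rfl
    · exact hmem
    · exact (B.inl_mem_chain_iff_inr _ hXs j).mp hmem
  refine Or.inr ⟨Xs ++ Ys, st, by simp [hXs], hst, ?_, ?_⟩
  · intro m hm
    by_cases hmle : m ≤ Xs.length
    · rw [List.take_append_of_le_length hmle]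
      rcases lt_or_eq_of_le hmle with hlt | rfl
      · exact hpart m hlt
      · rw [List.take_length]
        exact ⟨_, hst'mem⟩
    · push_neg at hmle
      have : List.take m (Xs ++ Ys) = Xs ++ List.take (m - Xs.length) Ys := by
        rw [List.take_append, List.take_of_length_le (le_of_lt (by omega))]
      rw [this, chain_append]
      have h3 := hpart' (m - Xs.length) (by simp at hm; omega)
      obtain ⟨p, hp⟩ := h3
      exact ⟨p, B.chain_mono (by simpa using hst'mem) _ hp⟩
  · rw [chain_append]
    exact B.chain_mono (by simpa using hst'mem) Ys hmem'

end QMBasis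
namespace QMBasis
variable {F : Type} [Field F] {G : Type} [AddCommGroup G] [DecidableEq G]
    {L : Type} [AddCommGroup L] [Module F L] {n : ℕ} {I : Type}
    {A : ColorGLT F G L n}

open Function

/-- Reversal of a single `μ`-step. -/
lemma muMem_rev (B : QMBasis A I) {q : I ⊕ I} {a : I} {X : Tup I n} {i' : I}
    (hq : q = Sum.inl a ∨ q = Sum.inr a)
    (h : B.muMem (Sum.map some some q) X (some i')) :
    ∃ (X' : Tup I n) (r₀ : I ⊕ I), (r₀ = Sum.inl i' ∨ r₀ = Sum.inr i') ∧
      B.muMem (Sum.map some some r₀) X' (some a) := by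
  obtain ⟨b, c⟩ := X
  rcases hq with rfl | rfl
  · cases b
    · -- q = inl a, unbarred: h : ∃ σ, aMem σ (cons (some a) c) (some i')
      exact ⟨(true, c), Sum.inl i', Or.inl rfl, h⟩
    · -- q = inl a, barred: h : ∃ σ, aMem σ (cons (some i') c) (some a)
      exact ⟨(false, c), Sum.inl i', Or.inl rfl, h⟩
  · cases b
    · -- q = inr a, unbarred
      obtain ⟨k, σ, hk⟩ := h
      refine ⟨(false, c), Sum.inr i', Or.inr rfl, k, ?_⟩
      have := B.aMem_congr
        (Fin.cons (some a) (Fin.cons (some i') (fun t => c (k.succAbove t))))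
        (Equiv.swap 0 1) ?_ hk
      · obtain ⟨σ', hσ'⟩ := this
        exact ⟨σ', hσ'⟩
      · intro t
        refine Fin.cases ?_ (fun s => ?_) t
        · simp [Equiv.swap_apply_left]
        · refine Fin.cases ?_ (fun u => ?_) s
          · have h1 : Equiv.swap (0 : Fin (n+2)) 1 1 = 0 := Equiv.swap_apply_right 0 1
            simp only [show ((0 : Fin (n+1)).succ : Fin (n+2)) = 1 from rfl, h1]
            simp
          · have h1 : Equiv.swap (0 : Fin (n+2)) 1 u.succ.succ = u.succ.succ := by
              apply Equiv.swap_apply_of_ne_of_ne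
              · exact Fin.succ_ne_zero _
              · simpa using (Fin.succ_injective _).ne (Fin.succ_ne_zero u)
            rw [h1]
            simp
    · exact absurd h (by simp [muMem])

/-- One-step connectivity. -/
lemma connected_of_muMem (B : QMBasis A I) {r₀ : I ⊕ I} {a b : I} {X : Tup I n}
    (hr : r₀ = Sum.inl a ∨ r₀ = Sum.inr a)
    (h : B.muMem (Sum.map some some r₀) X (some b)) : B.Connected a b := by
  refine Or.inr ⟨[X], r₀, by simp, hr, ?_, ?_⟩
  · intro m hm
    have : m = 0 := by simpa using hm
    subst this
    exact ⟨r₀, rfl⟩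
  · exact ⟨b, Or.inl rfl, r₀, rfl, h⟩

lemma chain_rev (B : QMBasis A I) (Xs : List (Tup I n)) :
    ∀ (q : I ⊕ I) (a b : I), (q = Sum.inl a ∨ q = Sum.inr a) →
    Sum.inl b ∈ B.chain {q} Xs → B.Connected b a := by
  induction Xs with
  | nil =>
    intro q a b hq hb
    simp only [chain, Set.mem_singleton_iff] at hb
    rcases hq with rfl | rfl
    · have hba : b = a := by injection hb
      exact hba ▸ B.connected_refl a
    · exact absurd hb Sum.inl_ne_inr
  | cons X r ih =>
    intro q a b hq hb
    simp only [chain] at hb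
    rcases B.mem_chain_iff.mp hb with ⟨q', hq', hb'⟩
    obtain ⟨i', hi', j, hj, hmu⟩ := hq'
    simp only [Set.mem_singleton_iff] at hj
    subst hj
    have h1 : B.Connected b i' := ih q' i' b hi' hb'
    obtain ⟨X', r₀, hr₀, hmu'⟩ := B.muMem_rev hq hmu
    exact B.connected_trans h1 (B.connected_of_muMem hr₀ hmu')

lemma connected_symm (B : QMBasis A I) {i j : I} (h : B.Connected i j) : B.Connected j i := by
  rcases h with rfl | ⟨Xs, st, hXs, hst, hpart, hmem⟩
  · exact B.connected_refl i
  · exact B.chain_rev Xs st i j hst hmem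

end QMBasis
namespace QMBasis
variable {F : Type} [Field F] {G : Type} [AddCommGroup G] [DecidableEq G]
    {L : Type} [AddCommGroup L] [Module F L] {n : ℕ} {I : Type}
    {A : ColorGLT F G L n}

open Function

lemma step_inl (B : QMBasis A I) (g : Fin (n+2) → I) (j : I) (σ₀ : Equiv.Perm (Fin (n+2)))
    (h1 : A.bracket (fun t => B.e (g (σ₀ t))) ≠ 0)
    (h2 : A.bracket (fun t => B.e (g (σ₀ t))) ∈ Submodule.span F {B.e j})
    (a : Fin (n+2)) : B.Connected (g a) j := by
  set tail : Fin (n+1) → Option I := fun s => some (g (Equiv.swap 0 a s.succ)) with htail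
  set T : Fin (n+2) → Option I := Fin.cons (some (g a)) tail with hT
  have hTt : ∀ t, T t = some (g (Equiv.swap 0 a t)) := by
    intro t
    refine Fin.cases ?_ (fun s => ?_) t
    · simp [hT, Equiv.swap_apply_left]
    · simp [hT, htail]
  set σ : Equiv.Perm (Fin (n+2)) := σ₀.trans (Equiv.swap 0 a) with hσ
  have key : ∀ t, T (σ t) = some (g (σ₀ t)) := by
    intro t
    rw [hTt]
    simp [hσ, Equiv.trans_apply]
  have hmu : B.muMem (Sum.map some some (Sum.inl (g a))) ((false, tail) : Tup I n)
      (some j) := by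
    refine ⟨σ, ⟨fun t => B.e (g (σ₀ t)), fun t => ?_, h1⟩, fun z hz => ?_, fun h => by simp at h⟩
    · rw [show (Fin.cons (some (g a)) tail : Fin (n+2) → Option I) = T from rfl, key]
      simp [elemSet]
    · have hz' : z = fun t => B.e (g (σ₀ t)) := by
        funext t
        have := hz t
        rw [show (Fin.cons (some (g a)) tail : Fin (n+2) → Option I) = T from rfl, key] at this
        simpa [elemSet] using this
      rw [hz']
      exact h2
  exact B.connected_of_muMem (Or.inl rfl) hmu

lemma step_inr (B : QMBasis A I) (g : Fin (n+2) → I) (σ₀ : Equiv.Perm (Fin (n+2)))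
    (h1 : A.bracket (fun t => B.e (g (σ₀ t))) ≠ 0)
    (h2 : A.bracket (fun t => B.e (g (σ₀ t))) ∈ B.V)
    (a b : Fin (n+2)) (hab : a ≠ b) : B.Connected (g a) (g b) := by
  obtain ⟨a₁, ha₁⟩ := Fin.exists_succAbove_eq (Ne.symm hab : b ≠ a).symm
  -- ha₁ : b.succAbove a₁ = a
  set ρ : Fin n → Fin (n+2) := fun s => b.succAbove (a₁.succAbove s) with hρ
  have hρa : ∀ s, ρ s ≠ a := by
    intro s hc
    rw [hρ, ← ha₁] at hc
    exact (Fin.succAbove_ne a₁ s) (b.succAbove_right_injective hc)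
  have hρb : ∀ s, ρ s ≠ b := fun s => Fin.succAbove_ne b _
  set c' : Fin (n+1) → Option I := Fin.cons none (fun s => some (g (ρ s))) with hc'
  set π : Fin (n+2) → Fin (n+2) := Fin.cons b (Fin.cons a ρ) with hπ
  have hπ0 : π 0 = b := rfl
  have hπ1 : π 1 = a := rfl
  have hπs : ∀ u : Fin n, π u.succ.succ = ρ u := fun u => rfl
  have hπinj : Function.Injective π := by
    intro t u
    refine Fin.cases (motive := fun t => π t = π u → t = u) ?_ (fun t1 => ?_) t
    · refine Fin.cases (motive := fun u => π 0 = π u → 0 = u) (fun _ => rfl) (fun u1 => ?_) u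
      refine Fin.cases (motive := fun u1 => π 0 = π u1.succ → (0 : Fin (n+2)) = u1.succ)
        ?_ (fun u2 => ?_) u1
      · exact fun h => absurd (show b = a from h).symm hab
      · exact fun h => absurd (show b = ρ u2 from h).symm (hρb u2)
    · refine Fin.cases (motive := fun u => π t1.succ = π u → t1.succ = u) ?_ (fun u1 => ?_) u
      · refine Fin.cases (motive := fun t1 => π t1.succ = π 0 → t1.succ = (0 : Fin (n+2)))
          ?_ (fun t2 => ?_) t1
        · exact fun h => absurd (show a = b from h) hab
        · exact fun h => absurd (show ρ t2 = b from h) (hρb t2)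
      · refine Fin.cases (motive := fun t1 => ∀ u1, π t1.succ = π u1.succ → t1.succ = u1.succ)
          ?_ (fun t2 => ?_) t1 u1 <;> clear u1
        · refine fun u1 => Fin.cases
            (motive := fun u1 => π (0:Fin (n+1)).succ = π u1.succ → (0:Fin (n+1)).succ = u1.succ)
            (fun _ => rfl) (fun u2 => ?_) u1
          exact fun h => absurd (show a = ρ u2 from h).symm (hρa u2)
        · refine fun u1 => Fin.cases
            (motive := fun u1 => π t2.succ.succ = π u1.succ → t2.succ.succ = u1.succ)
            ?_ (fun u2 => ?_) u1
          · exact fun h => absurd (show ρ t2 = a from h) (hρa t2)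
          · intro h
            have h2 : ρ t2 = ρ u2 := h
            have h3 : a₁.succAbove t2 = a₁.succAbove u2 := b.succAbove_right_injective h2
            have h4 : t2 = u2 := a₁.succAbove_right_injective h3
            rw [h4]
  have hπbij : Function.Bijective π := Finite.injective_iff_bijective.mp hπinj
  set πe : Equiv.Perm (Fin (n+2)) := Equiv.ofBijective π hπbij with hπe
  set T : Fin (n+2) → Option I :=
    Fin.cons (some (g b)) (Fin.cons (some (g a)) (fun s : Fin n => c' ((0 : Fin (n+1)).succAbove s)))
    with hT
  have hTt : ∀ t, T t = some (g (π t)) := by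
    intro t
    refine Fin.cases ?_ (fun s => ?_) t
    · simp [hT, hπ0]
    · refine Fin.cases ?_ (fun u => ?_) s
      · simp [hT, hπ1]
      · rw [hπs]
        simp only [hT, Fin.cons_succ]
        rw [show ((0 : Fin (n+1)).succAbove u) = u.succ from Fin.zero_succAbove u]
        simp [hc']
  set σ : Equiv.Perm (Fin (n+2)) := σ₀.trans πe.symm with hσ
  have key : ∀ t, T (σ t) = some (g (σ₀ t)) := by
    intro t
    rw [hTt]
    have : π (πe.symm (σ₀ t)) = σ₀ t := πe.apply_symm_apply (σ₀ t)
    simp [hσ, Equiv.trans_apply, this]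
  have hmu : B.muMem (Sum.map some some (Sum.inr (g a))) ((false, c') : Tup I n)
      (some (g b)) := by
    refine ⟨0, σ, ?_⟩
    rw [show (c' (0 : Fin (n+1)) : Option I) = none from rfl]
    refine ⟨⟨fun t => B.e (g (σ₀ t)), fun t => ?_, h1⟩, fun z hz => ?_, fun _ => Or.inl ?_⟩
    · rw [show (Fin.cons (some (g b)) (Fin.cons (some (g a))
        (fun t => c' ((0:Fin (n+1)).succAbove t))) : Fin (n+2) → Option I) = T from rfl, key]
      simp [elemSet]
    · have hz' : z = fun t => B.e (g (σ₀ t)) := by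
        funext t
        have := hz t
        rw [show (Fin.cons (some (g b)) (Fin.cons (some (g a))
          (fun t => c' ((0:Fin (n+1)).succAbove t))) : Fin (n+2) → Option I) = T from rfl, key] at this
        simpa [elemSet] using this
      rw [hz']
      exact h2
    · intro t
      rw [show (Fin.cons (some (g b)) (Fin.cons (some (g a))
        (fun t => c' ((0:Fin (n+1)).succAbove t))) : Fin (n+2) → Option I) = T from rfl, hTt]
      rfl
  exact B.connected_of_muMem (Or.inr rfl) hmu

lemma conn_pair (B : QMBasis A I) (g : Fin (n+2) → I)
    (h : ∃ σ₀ : Equiv.Perm (Fin (n+2)), A.bracket (fun t => B.e (g (σ₀ t))) ≠ 0 ∧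
      (A.bracket (fun t => B.e (g (σ₀ t))) ∈ B.V ∨
        ∃ j, A.bracket (fun t => B.e (g (σ₀ t))) ∈ Submodule.span F {B.e j}))
    (a b : Fin (n+2)) : B.Connected (g a) (g b) := by
  obtain ⟨σ₀, h1, h2 | ⟨j, h2⟩⟩ := h
  · by_cases hab : a = b
    · exact hab ▸ B.connected_refl _
    · exact B.step_inr g σ₀ h1 h2 a b hab
  · exact B.connected_trans (B.step_inl g j σ₀ h1 h2 a)
      (B.connected_symm (B.step_inl g j σ₀ h1 h2 b))

end QMBasis
namespace QMBasis
variable {F : Type} [Field F] {G : Type} [AddCommGroup G] [DecidableEq G]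
    {L : Type} [AddCommGroup L] [Module F L] {n : ℕ} {I : Type}
    {A : ColorGLT F G L n}

open Function

lemma tight_gen (B : QMBasis A I) {c : Fin (n+2) → I}
    (hμ : {x : Option I | ∃ σ, B.aMem σ (fun t => some (c t)) x} = {none}) :
    ∃ σ₀ : Equiv.Perm (Fin (n+2)), A.bracket (fun t => B.e (c (σ₀ t))) ≠ 0 ∧
      A.bracket (fun t => B.e (c (σ₀ t))) ∈ B.V := by
  have hnone : (none : Option I) ∈ {x : Option I | ∃ σ, B.aMem σ (fun t => some (c t)) x} := by
    rw [hμ]; rfl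
  obtain ⟨σ₀, ha⟩ := hnone
  obtain ⟨z, hz, hz0⟩ := ha.1
  have hze : z = fun t => B.e (c (σ₀ t)) := by
    funext t
    have := hz t
    simpa [elemSet] using this
  refine ⟨σ₀, hze ▸ hz0, ?_⟩
  have := ha.2.1 (fun t => B.e (c (σ₀ t))) (fun t => by simp [elemSet])
  simpa [targetSet] using this

lemma tight_gen_conn (B : QMBasis A I) {c : Fin (n+2) → I}
    (hμ : {x : Option I | ∃ σ, B.aMem σ (fun t => some (c t)) x} = {none})
    (a b : Fin (n+2)) : B.Connected (c a) (c b) := by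
  obtain ⟨σ₀, h1, h2⟩ := B.tight_gen hμ
  exact B.conn_pair c ⟨σ₀, h1, Or.inl h2⟩ a b

lemma sup_Jcls_eq_top (B : QMBasis A I) (ht : B.Tight) : (⨆ i : I, B.Jcls i) = ⊤ := by
  rw [eq_top_iff]
  have hW : B.W ≤ ⨆ i, B.Jcls i := by
    rw [← B.e_span, Submodule.span_le]
    rintro _ ⟨k, rfl⟩
    refine le_iSup B.Jcls k ?_
    refine Submodule.mem_sup_right (Submodule.subset_span ⟨k, B.connected_refl k, rfl⟩)
  have hV : B.V ≤ ⨆ i, B.Jcls i := by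
    rcases ht with h | h
    · rw [h]; exact bot_le
    · nth_rewrite 1 [h]
      rw [Submodule.span_le]
      rintro z ⟨c, hμ, rfl⟩
      refine le_iSup B.Jcls (c 0) (Submodule.mem_sup_left (Submodule.mem_inf.mpr ⟨?_, ?_⟩))
      · exact Submodule.subset_span ⟨c, fun t => B.tight_gen_conn hμ 0 t, rfl⟩
      · rw [h]
        exact Submodule.subset_span ⟨c, hμ, rfl⟩
  intro x _
  have hx : x ∈ B.V ⊔ B.W := by rw [B.compl.sup_eq_top]; trivial
  rcases Submodule.mem_sup.mp hx with ⟨v, hv, w, hw, rfl⟩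
  exact Submodule.add_mem _ (hV hv) (hW hw)

end QMBasis
namespace QMBasis
variable {F : Type} [Field F] {G : Type} [AddCommGroup G] [DecidableEq G]
    {L : Type} [AddCommGroup L] [Module F L] {n : ℕ} {I : Type}
    {A : ColorGLT F G L n}

open Function

/-- Reduce a multilinear evaluation on spans to evaluations on generators. -/
lemma ml_span {m : ℕ} (f : MultilinearMap F (fun _ : Fin m => L) L) (S : Fin m → Set L)
    (z : Fin m → L) (hz : ∀ t, z t ∈ Submodule.span F (S t)) :
    f z ∈ Submodule.span F {u : L | ∃ w : Fin m → L, (∀ t, w t ∈ S t) ∧ u = f w} := by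
  classical
  suffices H : ∀ s : Finset (Fin m), ∀ z : Fin m → L, (∀ t, t ∉ s → z t ∈ S t) →
      (∀ t, t ∈ s → z t ∈ Submodule.span F (S t)) →
      f z ∈ Submodule.span F {u : L | ∃ w : Fin m → L, (∀ t, w t ∈ S t) ∧ u = f w} by
    exact H Finset.univ z (fun t ht => absurd (Finset.mem_univ t) ht) (fun t _ => hz t)
  intro s
  induction s using Finset.induction with
  | empty =>
    intro z h1 _
    exact Submodule.subset_span ⟨z, fun t => h1 t (Finset.notMem_empty t), rfl⟩
  | @insert a s ha ih =>
    intro z h1 h2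
    have hza : z a ∈ Submodule.span F (S a) := h2 a (Finset.mem_insert_self a s)
    have key : ∀ v ∈ Submodule.span F (S a),
        f (update z a v) ∈ Submodule.span F
          {u : L | ∃ w : Fin m → L, (∀ t, w t ∈ S t) ∧ u = f w} := by
      intro v hv
      induction hv using Submodule.span_induction with
      | mem v hvS =>
        refine ih (update z a v) (fun t ht => ?_) (fun t ht => ?_)
        · by_cases hta : t = a
          · subst hta; rw [update_self]; exact hvS
          · rw [update_of_ne hta]
            exact h1 t (by simp [hta, ht])
        · have hta : t ≠ a := fun hh => ha (hh ▸ ht)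
          rw [update_of_ne hta]
          exact h2 t (Finset.mem_insert_of_mem ht)
      | zero =>
        rw [f.map_coord_zero a (update_self a 0 z)]
        exact Submodule.zero_mem _
      | add u v _ _ hu hv => rw [f.map_update_add]; exact Submodule.add_mem _ hu hv
      | smul c u _ hu => rw [f.map_update_smul]; exact Submodule.smul_mem _ c hu
    have := key (z a) hza
    rwa [update_eq_self] at this

/-- The index set of a slot tag. -/
def tagIdx {I : Type} {n : ℕ} : I ⊕ (Fin (n+2) → I) → Set I :=
  Sum.elim (fun m => {m}) Set.range

/-- The value of a slot tag. -/
def tagVal (B : QMBasis A I) : I ⊕ (Fin (n+2) → I) → L :=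
  Sum.elim B.e (fun f => A.bracket (fun s => B.e (f s)))

/-- The degree of a slot tag. -/
def tagDeg (B : QMBasis A I) : I ⊕ (Fin (n+2) → I) → G :=
  Sum.elim B.deg (fun f => ∑ s, B.deg (f s))

lemma tagVal_homog (B : QMBasis A I) (c : I ⊕ (Fin (n+2) → I)) :
    B.tagVal c ∈ A.grading (B.tagDeg c) := by
  cases c with
  | inl m => exact B.e_homog m
  | inr f => exact A.bracket_graded (fun s => B.deg (f s)) _ (fun t => B.e_homog (f t))

/-- Key induction: a nonzero bracket of tagged slots connects all the indices involved. -/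
lemma conn_of_ne_zero (B : QMBasis A I) :
    ∀ (k : ℕ) (tag : Fin (n+2) → (I ⊕ (Fin (n+2) → I))),
    (Finset.univ.filter (fun t => (tag t).isRight)).card ≤ k →
    (∀ t f, tag t = Sum.inr f → ∀ a b, B.Connected (f a) (f b)) →
    A.bracket (fun t => B.tagVal (tag t)) ≠ 0 →
    ∀ s s' a a', a ∈ tagIdx (tag s) → a' ∈ tagIdx (tag s') → B.Connected a a' := by
  classical
  intro k
  induction k with
  | zero =>
    intro tag hcard hpair hne s s' a a' ha ha'
    -- no molecular slots
    have hatom : ∀ t, ∃ m, tag t = Sum.inl m := by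
      intro t
      cases htag : tag t with
      | inl m => exact ⟨m, rfl⟩
      | inr f =>
        exfalso
        have : t ∈ Finset.univ.filter (fun t => (tag t).isRight) := by
          simp [htag]
        have := Finset.card_pos.mpr ⟨t, this⟩
        omega
    choose g hg using hatom
    have hzz : (fun t => B.tagVal (tag t)) = fun t => B.e (g t) := by
      funext t; rw [hg t]; rfl
    rw [hzz] at hne
    have hconn : ∀ u v, B.Connected (g u) (g v) := by
      intro u v
      refine B.conn_pair g ⟨Equiv.refl _, ?_, ?_⟩ u v
      · exact hne
      · rcases B.qm1 g with ⟨j, hj⟩ | hV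
        · exact Or.inr ⟨j, hj⟩
        · exact Or.inl hV
    rw [hg s] at ha; rw [hg s'] at ha'
    simp only [tagIdx, Sum.elim_inl, Set.mem_singleton_iff] at ha ha'
    exact ha ▸ ha' ▸ hconn s s'
  | succ k ih =>
    intro tag hcard hpair hne s s' a a' ha ha'
    by_cases hmol : ∃ p f, tag p = Sum.inr f
    · obtain ⟨p, f, hp⟩ := hmol
      set Z : Fin (n+2) → L := fun t => B.tagVal (tag t) with hZ
      have hZp : A.bracket (fun s => B.e (f s)) = Z p := by
        show A.bracket _ = B.tagVal (tag p)
        rw [hp]; rfl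
      have heq := A.glt p (fun s => B.deg (f s)) (fun s => B.tagDeg (tag (p.succAbove s)))
        (fun s => B.e (f s)) (fun s => Z (p.succAbove s))
        (fun t => B.e_homog (f t)) (fun t => B.tagVal_homog _)
      rw [hZp] at heq
      have hins : (Fin.insertNth p (Z p) (fun s => Z (p.succAbove s)) : Fin (n+2) → L) = Z :=
        Fin.insertNth_self_removeNth p Z
      rw [hins] at heq
      rw [heq] at hne
      obtain ⟨i, -, hne⟩ := Finset.exists_ne_zero_of_sum_ne_zero hne
      obtain ⟨j, -, hne⟩ := Finset.exists_ne_zero_of_sum_ne_zero hne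
      obtain ⟨σ₁, -, hne⟩ := Finset.exists_ne_zero_of_sum_ne_zero hne
      obtain ⟨σ₂, -, hne⟩ := Finset.exists_ne_zero_of_sum_ne_zero hne
      set W : L := A.bracket (Fin.insertNth j (B.e (f (σ₁ i)))
        (fun t => Z (p.succAbove (σ₂ t)))) with hW
      have hWne : W ≠ 0 := by
        intro h0
        rw [h0] at hne
        exact hne (by rw [A.bracket.map_coord_zero i (update_self i 0 _), smul_zero])
      -- the new tagged tuple
      set tag' : Fin (n+2) → (I ⊕ (Fin (n+2) → I)) :=
        Fin.insertNth j (Sum.inl (f (σ₁ i))) (fun s => tag (p.succAbove (σ₂ s))) with htag'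
      have htagval : (fun t => B.tagVal (tag' t)) =
          (Fin.insertNth j (B.e (f (σ₁ i))) (fun t => Z (p.succAbove (σ₂ t))) : Fin (n+2) → L) := by
        funext t
        refine Fin.succAboveCases j ?_ (fun u => ?_) t
        · rw [htag']
          simp only [Fin.insertNth_apply_same]
          rfl
        · rw [htag']
          simp only [Fin.insertNth_apply_succAbove]
          rfl
      have hWne' : A.bracket (fun t => B.tagVal (tag' t)) ≠ 0 := by
        rw [htagval]; exact hWne
      -- cardinality decreases
      have hcard' : (Finset.univ.filter (fun t => (tag' t).isRight)).card ≤ k := by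
        have e1 : ∀ (τ : Fin (n+2) → (I ⊕ (Fin (n+2) → I))),
            (Finset.univ.filter (fun t => (τ t).isRight)).card =
            ∑ t : Fin (n+2), (if (τ t).isRight then 1 else 0) := by
          intro τ; rw [Finset.card_filter]
        rw [e1]
        have e2 := Fin.sum_univ_succAbove
          (fun t => (if ((tag' t).isRight : Bool) then (1:ℕ) else 0)) j
        rw [e2]
        have e3 : (tag' j).isRight = false := by rw [htag']; simp
        have e4 : ∀ u : Fin (n+1), tag' (j.succAbove u) = tag (p.succAbove (σ₂ u)) := by
          intro u; rw [htag']; simp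
        have e5 : ∑ u : Fin (n+1), (if ((tag' (j.succAbove u)).isRight : Bool) then (1:ℕ) else 0)
            = ∑ u : Fin (n+1), (if ((tag (p.succAbove u)).isRight : Bool) then (1:ℕ) else 0) := by
          rw [show (fun u : Fin (n+1) => (if ((tag' (j.succAbove u)).isRight : Bool)
            then (1:ℕ) else 0)) = fun u => (if ((tag (p.succAbove (σ₂ u))).isRight : Bool)
            then (1:ℕ) else 0) from funext fun u => by rw [e4]]
          exact Equiv.sum_comp σ₂ (fun v => if ((tag (p.succAbove v)).isRight : Bool)
            then (1:ℕ) else 0)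
        rw [e3, e5]
        simp only [Bool.false_eq_true, if_false, zero_add]
        have e6 := Fin.sum_univ_succAbove
          (fun t => (if ((tag t).isRight : Bool) then (1:ℕ) else 0)) p
        have e7 : (Finset.univ.filter (fun t => (tag t).isRight)).card =
            ∑ t : Fin (n+2), (if ((tag t).isRight : Bool) then (1:ℕ) else 0) := by
          rw [Finset.card_filter]
        have e8 : ((tag p).isRight : Bool) = true := by rw [hp]; rfl
        rw [e7, e6, e8] at hcard
        simp only [if_true] at hcard
        omega
      have hpair' : ∀ t f', tag' t = Sum.inr f' → ∀ a b, B.Connected (f' a) (f' b) := by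
        intro t f' ht
        by_cases htj : t = j
        · subst htj
          rw [htag'] at ht
          simp only [Fin.insertNth_apply_same] at ht
          cases ht
        · obtain ⟨u, hu⟩ := Fin.exists_succAbove_eq htj
          rw [← hu, htag'] at ht
          simp only [Fin.insertNth_apply_succAbove] at ht
          exact hpair _ f' ht
      have IH := ih tag' hcard' hpair' hWne'
      -- connect old tag indices through the new tuple
      have bridge : ∀ (t : Fin (n+2)) (b : I), t ≠ p → b ∈ tagIdx (tag t) →
          ∃ t', b ∈ tagIdx (tag' t') := by
        intro t b htp hb
        obtain ⟨t₁, ht₁⟩ := Fin.exists_succAbove_eq (Ne.symm htp).symm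
        refine ⟨j.succAbove (σ₂.symm t₁), ?_⟩
        have : tag' (j.succAbove (σ₂.symm t₁)) = tag (p.succAbove (σ₂ (σ₂.symm t₁))) := by
          rw [htag']; simp
        rw [this, Equiv.apply_symm_apply, ht₁]
        exact hb
      -- the distinguished new atomic index, lies in range f = tagIdx (tag p)
      have hfp : f (σ₁ i) ∈ tagIdx (tag' j) := by
        rw [htag']
        simp only [Fin.insertNth_apply_same]
        exact Set.mem_singleton _
      have hconn_fp : ∀ (t : Fin (n+2)) (b : I), b ∈ tagIdx (tag t) →
          B.Connected (f (σ₁ i)) b := by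
        intro t b hb
        by_cases htp : t = p
        · subst htp
          rw [hp] at hb
          simp only [tagIdx, Sum.elim_inr] at hb
          obtain ⟨u, rfl⟩ := hb
          exact hpair t f hp (σ₁ i) u
        · obtain ⟨t', hb'⟩ := bridge t b htp hb
          exact IH j t' _ _ hfp hb'
      exact B.connected_trans (B.connected_symm (hconn_fp s a ha)) (hconn_fp s' a' ha')
    · -- no molecular slot at all: same as base case
      push_neg at hmol
      have hatom : ∀ t, ∃ m, tag t = Sum.inl m := by
        intro t
        cases htag : tag t with
        | inl m => exact ⟨m, rfl⟩
        | inr f => exact absurd htag (hmol t f)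
      choose g hg using hatom
      have hzz : (fun t => B.tagVal (tag t)) = fun t => B.e (g t) := by
        funext t; rw [hg t]; rfl
      rw [hzz] at hne
      have hconn : ∀ u v, B.Connected (g u) (g v) := by
        intro u v
        refine B.conn_pair g ⟨Equiv.refl _, ?_, ?_⟩ u v
        · exact hne
        · rcases B.qm1 g with ⟨j, hj⟩ | hV
          · exact Or.inr ⟨j, hj⟩
          · exact Or.inl hV
      rw [hg s] at ha; rw [hg s'] at ha'
      simp only [tagIdx, Sum.elim_inl, Set.mem_singleton_iff] at ha ha'
      exact ha ▸ ha' ▸ hconn s s'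

end QMBasis
namespace QMBasis
variable {F : Type} [Field F] {G : Type} [AddCommGroup G] [DecidableEq G]
    {L : Type} [AddCommGroup L] [Module F L] {n : ℕ} {I : Type}
    {A : ColorGLT F G L n}

open Function

/-- The span of the `V`-valued products of basis elements whose index tuples satisfy `Q`. -/
def XV (B : QMBasis A I) (Q : (Fin (n+2) → I) → Prop) : Submodule F L :=
  Submodule.span F {b : L | ∃ c : Fin (n+2) → I, Q c ∧
    b = A.bracket (fun t => B.e (c t)) ∧ b ∈ B.V}

lemma XV_le_V (B : QMBasis A I) (Q : (Fin (n+2) → I) → Prop) : B.XV Q ≤ B.V := by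
  rw [XV, Submodule.span_le]
  rintro b ⟨c, -, -, hb⟩
  exact hb

lemma span_inf_V_le_XV (B : QMBasis A I) (P : I → Prop) (Q : (Fin (n+2) → I) → Prop)
    (hPQ : ∀ c : Fin (n+2) → I, (∀ t, P (c t)) → Q c) :
    Submodule.span F {z : L | ∃ c : Fin (n+2) → I, (∀ t, P (c t)) ∧
      z = A.bracket (fun t => B.e (c t))} ⊓ B.V ≤ B.XV Q := by
  classical
  set Gset : Set L := {z : L | ∃ c : Fin (n+2) → I, (∀ t, P (c t)) ∧
    z = A.bracket (fun t => B.e (c t))} with hGset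
  set GV : Set L := {z ∈ Gset | z ∈ B.V} with hGV
  set GW : Set L := {z ∈ Gset | z ∈ B.W} with hGW
  have hsplit : Submodule.span F Gset ≤ Submodule.span F GV ⊔ Submodule.span F GW := by
    rw [Submodule.span_le]
    intro g hg
    obtain ⟨c, hcP, hgval⟩ := hg
    rcases B.qm1 c with ⟨j, hj⟩ | hV
    · refine Submodule.mem_sup_right (Submodule.subset_span ⟨⟨c, hcP, hgval⟩, ?_⟩)
      rw [hgval]
      have hejW : B.e j ∈ B.W := by
        rw [← B.e_span]
        exact Submodule.subset_span ⟨j, rfl⟩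
      rcases Submodule.mem_span_singleton.mp hj with ⟨a, ha⟩
      rw [← ha]
      exact B.W.smul_mem a hejW
    · exact Submodule.mem_sup_left (Submodule.subset_span ⟨⟨c, hcP, hgval⟩, hgval ▸ hV⟩)
  intro x hx
  obtain ⟨hx1, hx2⟩ := Submodule.mem_inf.mp hx
  obtain ⟨u, hu, w, hw, huw⟩ := Submodule.mem_sup.mp (hsplit hx1)
  have huV : u ∈ B.V := by
    have : Submodule.span F GV ≤ B.V := by
      rw [Submodule.span_le]; rintro z ⟨-, hz⟩; exact hz
    exact this hu
  have hwW : w ∈ B.W := by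
    have : Submodule.span F GW ≤ B.W := by
      rw [Submodule.span_le]; rintro z ⟨-, hz⟩; exact hz
    exact this hw
  have hwV : w ∈ B.V := by
    have : w = x - u := by rw [← huw]; abel
    rw [this]
    exact B.V.sub_mem hx2 huV
  have hw0 : w = 0 := by
    have hbot := B.compl.inf_eq_bot
    have hmem : w ∈ B.V ⊓ B.W := Submodule.mem_inf.mpr ⟨hwV, hwW⟩
    rw [hbot] at hmem
    simpa using hmem
  have hxu : x = u := by rw [← huw, hw0, add_zero]
  rw [hxu]
  have : Submodule.span F GV ≤ B.XV Q := by
    apply Submodule.span_mono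
    rintro z ⟨⟨c, hcP, hzval⟩, hzV⟩
    exact ⟨c, hPQ c hcP, hzval, hzV⟩
  exact this hu

lemma bracket_eq_zero_of_inter (B : QMBasis A I) (ht : B.Tight) {i : I} {x : L}
    (hxi : x ∈ B.XV (fun c => ∀ t, B.Connected i (c t)))
    (hxo : x ∈ B.XV (fun c => (∀ a b, B.Connected (c a) (c b)) ∧
      ∀ t, ¬ B.Connected i (c t))) :
    ∀ (σ : Equiv.Perm (Fin (n + 2))) (y : Fin (n + 2) → L),
      y 0 = x → A.bracket (fun t => y (σ t)) = 0 := by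
  classical
  rcases ht with htV | htV
  · -- V = ⊥ forces x = 0
    intro σ y hy0
    have hx0 : x = 0 := by
      have hle := B.XV_le_V (fun c => ∀ t, B.Connected i (c t))
      have := hle hxi
      rw [htV] at this
      simpa using this
    have hz : (fun t => y (σ t)) (σ.symm 0) = 0 := by
      simp [hy0, hx0]
    exact A.bracket.map_coord_zero (σ.symm 0) hz
  set TightSet : Set L := {z : L | ∃ c : Fin (n + 2) → I,
      ({x : Option I | ∃ σ, B.aMem σ (fun t => some (c t)) x} = {none}) ∧
      z = A.bracket (fun t => B.e (c t))} with hTS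
  intro σ y hy0
  set Z : Fin (n+2) → L := fun t => y (σ t) with hZdef
  set p₀ : Fin (n+2) := σ.symm 0 with hp₀
  have hZp₀ : Z p₀ = x := by
    rw [hZdef, hp₀]
    simp [hy0]
  set S : Fin (n+2) → Set L := fun t => if t = p₀ then {x} else (Set.range B.e ∪ TightSet)
    with hS
  have hzmem : ∀ t, Z t ∈ Submodule.span F (S t) := by
    intro t
    by_cases htp : t = p₀
    · subst htp
      rw [hS]
      simp only [if_pos rfl]
      rw [hZp₀]
      exact Submodule.mem_span_singleton_self x
    · rw [hS]
      simp only [if_neg htp]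
      have htop : Submodule.span F (Set.range B.e ∪ TightSet) = ⊤ := by
        rw [Submodule.span_union, B.e_span, ← htV, sup_comm]
        exact B.compl.sup_eq_top
      rw [htop]
      trivial
  have hred := ml_span A.bracket S Z hzmem
  have hgen : ∀ w : Fin (n+2) → L, (∀ t, w t ∈ S t) → A.bracket w = 0 := by
    intro w hwS
    by_contra hne
    have hwp₀ : w p₀ = x := by
      have := hwS p₀
      rw [hS] at this
      simpa using this
    have hI : Nonempty I := by
      by_contra hI
      apply B.W_ne_bot
      rw [← B.e_span]
      have : Set.range B.e = ∅ := by
        rw [Set.range_eq_empty_iff]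
        exact ⟨fun ii => absurd ⟨ii⟩ hI⟩
      rw [this, Submodule.span_empty]
    -- choose tags for the slots other than p₀
    have hslot : ∀ t : Fin (n+2), ∃ tg : I ⊕ (Fin (n+2) → I), t ≠ p₀ →
        (w t = B.tagVal tg ∧
          ∀ f', tg = Sum.inr f' → ∀ a b, B.Connected (f' a) (f' b)) := by
      intro t
      by_cases htp : t = p₀
      · exact ⟨Sum.inl (Classical.choice hI), fun h => absurd htp h⟩
      · have hmem := hwS t
        rw [hS] at hmem
        simp only [if_neg htp] at hmem
        rcases hmem with ⟨m, hm⟩ | ⟨c', hμ, hval⟩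
        · exact ⟨Sum.inl m, fun _ => ⟨hm.symm, fun f' hf' => by cases hf'⟩⟩
        · refine ⟨Sum.inr c', fun _ => ⟨hval, fun f' hf' => ?_⟩⟩
          injection hf' with hh
          subst hh
          exact fun a b => B.tight_gen_conn hμ a b
    choose tg htg using hslot
    -- extraction of a nonvanishing substituted generator
    have hpick : ∀ Q : (Fin (n+2) → I) → Prop, x ∈ B.XV Q →
        ∃ c : Fin (n+2) → I, Q c ∧
        A.bracket (Function.update w p₀ (A.bracket (fun t => B.e (c t)))) ≠ 0 := by
      intro Q hxQ
      set φ : L →ₗ[F] L :=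
        { toFun := fun v => A.bracket (Function.update w p₀ v)
          map_add' := fun u v => A.bracket.map_update_add w p₀ u v
          map_smul' := fun a v => A.bracket.map_update_smul w p₀ a v } with hφ
      have hφx : φ x ≠ 0 := by
        have hupd : Function.update w p₀ x = w := by rw [← hwp₀, update_eq_self]
        show A.bracket (Function.update w p₀ x) ≠ 0
        rw [hupd]
        exact hne
      have hφspan : φ x ∈ Submodule.span F (φ '' {b : L | ∃ c : Fin (n+2) → I,
          Q c ∧ b = A.bracket (fun t => B.e (c t)) ∧ b ∈ B.V}) := by
        have himg := Submodule.span_image (R := F) (M := L) (M₂ := L) φ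
          (s := {b : L | ∃ c : Fin (n+2) → I,
            Q c ∧ b = A.bracket (fun t => B.e (c t)) ∧ b ∈ B.V})
        exact himg ▸ Submodule.mem_map_of_mem hxQ
      by_contra hcon
      push_neg at hcon
      have hzero : φ '' {b : L | ∃ c : Fin (n+2) → I,
          Q c ∧ b = A.bracket (fun t => B.e (c t)) ∧ b ∈ B.V} ⊆ {(0 : L)} := by
        rintro _ ⟨b, ⟨c, hcQ, hbval, hbV⟩, rfl⟩
        have hz := hcon c hcQ
        simp only [Set.mem_singleton_iff]
        show A.bracket (Function.update w p₀ b) = 0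
        rw [hbval]
        exact hz
      have : φ x ∈ (⊥ : Submodule F L) := by
        refine (Submodule.span_le.mpr fun z hz => ?_) hφspan
        have := hzero hz
        simp only [Set.mem_singleton_iff] at this
        simp [this]
      exact hφx (by simpa using this)
    obtain ⟨c, hcQ, hcne⟩ := hpick _ hxi
    obtain ⟨d, hdQ, hdne⟩ := hpick _ hxo
    -- running the connection machine with a given first tuple
    have hrun : ∀ (g : Fin (n+2) → I), (∀ a b, B.Connected (g a) (g b)) →
        A.bracket (Function.update w p₀ (A.bracket (fun t => B.e (g t)))) ≠ 0 →
        ∀ (t : Fin (n+2)), t ≠ p₀ → ∀ b : I, b ∈ tagIdx (tg t) →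
          B.Connected (g 0) b := by
      intro g hgconn hgne t htp b hbmem
      set tagf : Fin (n+2) → (I ⊕ (Fin (n+2) → I)) :=
        Function.update tg p₀ (Sum.inr g) with htagd
      have hval : (fun u => B.tagVal (tagf u)) =
          Function.update w p₀ (A.bracket (fun s => B.e (g s))) := by
        funext u
        by_cases hup : u = p₀
        · subst hup
          rw [htagd, update_self, update_self]
          rfl
        · rw [htagd, update_of_ne hup, update_of_ne hup, ((htg u) hup).1]
      have hpairs : ∀ u f', tagf u = Sum.inr f' → ∀ a b, B.Connected (f' a) (f' b) := by
        intro u f' hu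
        by_cases hup : u = p₀
        · subst hup
          rw [htagd, update_self] at hu
          injection hu with hh
          subst hh
          exact hgconn
        · rw [htagd, update_of_ne hup] at hu
          exact ((htg u) hup).2 f' hu
      have hne' : A.bracket (fun u => B.tagVal (tagf u)) ≠ 0 := by
        rw [hval]; exact hgne
      have hcard : (Finset.univ.filter (fun u => (tagf u).isRight)).card ≤ n + 2 := by
        refine le_trans (Finset.card_filter_le _ _) ?_
        simp
      have hCONN := B.conn_of_ne_zero (n+2) tagf hcard hpairs hne'
      refine hCONN p₀ t (g 0) b ?_ ?_
      · rw [htagd, update_self]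
        exact ⟨0, rfl⟩
      · rw [htagd, update_of_ne htp]
        exact hbmem
    -- the anchor slot
    set t₀ : Fin (n+2) := if p₀ = 0 then 1 else 0 with ht₀def
    have ht₀ : t₀ ≠ p₀ := by
      rw [ht₀def]
      by_cases h : p₀ = 0
      · rw [if_pos h, h]
        exact one_ne_zero
      · rw [if_neg h]
        exact fun hh => h hh.symm
    set b₀ : I := Sum.elim id (fun f => f 0) (tg t₀) with hb₀def
    have hb₀ : b₀ ∈ tagIdx (tg t₀) := by
      rw [hb₀def]
      cases htg0 : tg t₀ with
      | inl m => exact Set.mem_singleton _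
      | inr f => exact ⟨0, rfl⟩
    have hcconn : ∀ a b, B.Connected (c a) (c b) := fun a b =>
      B.connected_trans (B.connected_symm (hcQ a)) (hcQ b)
    have hside1 : B.Connected (c 0) b₀ := hrun c hcconn hcne t₀ ht₀ b₀ hb₀
    have hside2 : B.Connected (d 0) b₀ := hrun d hdQ.1 hdne t₀ ht₀ b₀ hb₀
    have : B.Connected i (d 0) :=
      B.connected_trans (B.connected_trans (hcQ 0) hside1) (B.connected_symm hside2)
    exact hdQ.2 0 this
  -- conclude
  have hsub : {u : L | ∃ w : Fin (n+2) → L, (∀ t, w t ∈ S t) ∧ u = A.bracket w} ⊆ {0} := by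
    rintro u ⟨w, hw, rfl⟩
    exact hgen w hw
  have : A.bracket Z ∈ (⊥ : Submodule F L) := by
    refine (Submodule.span_le.mpr fun z hz => ?_) hred
    have := hsub hz
    simp only [Set.mem_singleton_iff] at this
    simp [this]
  simpa using this

end QMBasis
namespace QMBasis
variable {F : Type} [Field F] {G : Type} [AddCommGroup G] [DecidableEq G]
    {L : Type} [AddCommGroup L] [Module F L] {n : ℕ} {I : Type}
    {A : ColorGLT F G L n}

open Function

lemma disjoint_Jcls (B : QMBasis A I) (hc : A.Centerless) (ht : B.Tight) (i : I) :
    Disjoint (B.Jcls i) (⨆ j ∈ {j : I | ¬ B.Connected i j}, B.Jcls j) := by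
  classical
  rw [Submodule.disjoint_def]
  intro x hxi hxo
  rw [Jcls] at hxi
  obtain ⟨v, hv, w, hw, hvw⟩ := Submodule.mem_sup.mp hxi
  have hsup : (⨆ j ∈ {j : I | ¬ B.Connected i j}, B.Jcls j) =
      (⨆ j ∈ {j : I | ¬ B.Connected i j}, B.Vcls j) ⊔
      (⨆ j ∈ {j : I | ¬ B.Connected i j}, B.Wcls j) := by
    have h1 : (⨆ j ∈ {j : I | ¬ B.Connected i j}, B.Jcls j) =
        ⨆ j, ((⨆ _ : j ∈ {j : I | ¬ B.Connected i j}, B.Vcls j) ⊔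
          ⨆ _ : j ∈ {j : I | ¬ B.Connected i j}, B.Wcls j) :=
      iSup_congr fun j => iSup_sup_eq
    rw [h1]
    exact iSup_sup_eq
  rw [hsup] at hxo
  obtain ⟨v', hv', w', hw', hvw'⟩ := Submodule.mem_sup.mp hxo
  -- V and W components
  have hvV : v ∈ B.V := (Submodule.mem_inf.mp hv).2
  have hv'V : v' ∈ B.V := by
    have hle : (⨆ j ∈ {j : I | ¬ B.Connected i j}, B.Vcls j) ≤ B.V :=
      iSup₂_le fun j _ => inf_le_right
    exact hle hv'
  have hwW : w ∈ Submodule.span F (B.e '' B.cls i) := hw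
  set U : Set I := ⋃ j ∈ {j : I | ¬ B.Connected i j}, B.cls j with hU
  have hw'W : w' ∈ Submodule.span F (B.e '' U) := by
    have hle : (⨆ j ∈ {j : I | ¬ B.Connected i j}, B.Wcls j) ≤
        Submodule.span F (B.e '' U) := by
      refine iSup₂_le fun j hj => Submodule.span_mono (Set.image_mono ?_)
      intro k hk
      exact Set.mem_biUnion hj hk
    exact hle hw'
  have hwW' : w ∈ B.W := by
    have : Submodule.span F (B.e '' B.cls i) ≤ B.W := by
      rw [← B.e_span]
      exact Submodule.span_mono (Set.image_subset_range _ _)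
    exact this hwW
  have hw'W'' : w' ∈ B.W := by
    have : Submodule.span F (B.e '' U) ≤ B.W := by
      rw [← B.e_span]
      exact Submodule.span_mono (Set.image_subset_range _ _)
    exact this hw'W
  have heq : v - v' = w' - w := by
    rw [sub_eq_sub_iff_add_eq_add, hvw.trans hvw'.symm, add_comm]
  have hVW0 : v - v' = 0 ∧ w' - w = 0 := by
    have hmem : v - v' ∈ B.V ⊓ B.W := by
      refine Submodule.mem_inf.mpr ⟨B.V.sub_mem hvV hv'V, ?_⟩
      rw [heq]
      exact B.W.sub_mem hw'W'' hwW'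
    rw [B.compl.inf_eq_bot] at hmem
    have h1 : v - v' = 0 := by simpa using hmem
    exact ⟨h1, by rw [← heq]; exact h1⟩
  have hww' : w = w' := by
    have := hVW0.2
    have h2 : w' = w := by
      rwa [sub_eq_zero] at this
    exact h2.symm
  -- the W component vanishes by linear independence
  have hdisjU : Disjoint (B.cls i) U := by
    rw [Set.disjoint_left]
    intro k hk hkU
    rw [hU, Set.mem_iUnion₂] at hkU
    obtain ⟨j, hj, hkj⟩ := hkU
    exact hj (B.connected_trans hk (B.connected_symm hkj))
  have hw0 : w = 0 := by
    have hd := B.e_indep.disjoint_span_image (s := B.cls i) (t := U) hdisjU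
    exact (Submodule.disjoint_def.mp hd) w hwW (hww' ▸ hw'W)
  have hxv : x = v := by rw [← hvw, hw0, add_zero]
  have hxv' : x = v' := by rw [← hvw', ← hww', hw0, add_zero]
  -- pass to the V-valued generator spans
  have hxXi : x ∈ B.XV (fun c => ∀ t, B.Connected i (c t)) := by
    refine B.span_inf_V_le_XV (fun m => B.Connected i m) _ (fun c h => h) ?_
    rw [hxv]
    exact hv
  have hxXo : x ∈ B.XV (fun c => (∀ a b, B.Connected (c a) (c b)) ∧
      ∀ t, ¬ B.Connected i (c t)) := by
    have hle : (⨆ j ∈ {j : I | ¬ B.Connected i j}, B.Vcls j) ≤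
        B.XV (fun c => (∀ a b, B.Connected (c a) (c b)) ∧
          ∀ t, ¬ B.Connected i (c t)) := by
      refine iSup₂_le fun j hj => ?_
      refine B.span_inf_V_le_XV (fun m => B.Connected j m) _ (fun c hcc => ?_)
      constructor
      · exact fun a b => B.connected_trans (B.connected_symm (hcc a)) (hcc b)
      · intro t hcontra
        exact hj (B.connected_trans hcontra (B.connected_symm (hcc t)))
    rw [hxv']
    exact hle hv'
  exact hc x (B.bracket_eq_zero_of_inter ht hxXi hxXo)

end QMBasis

theorem stmt10 {F : Type} [Field F] {G : Type} [AddCommGroup G] [DecidableEq G]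
    {L : Type} [AddCommGroup L] [Module F L] {n : ℕ} {I : Type}
    {A : ColorGLT F G L n} (B : QMBasis A I) (hc : A.Centerless) (ht : B.Tight) :
    (⨆ i : I, B.Jcls i) = ⊤ ∧
    ∀ i : I, Disjoint (B.Jcls i) (⨆ j ∈ {j : I | ¬ B.Connected i j}, B.Jcls j) := by
  exact ⟨B.sup_Jcls_eq_top ht, fun i => B.disjoint_Jcls hc ht i⟩
end

section
/- Let L = V ⊕ W be a color gLt-algebra admitting a μ-quasi-multiplicative basis of W ≠ 0. If L is centerless and V is tight, then L = ⊕_k 𝔍_k is the direct sum of the family of its minimal color gLt-ideals, each admitting a μ-quasi-multiplicative basis inherited from that of L; concretely the 𝔍_k are the ideals 𝔍_{[i]} = V_{[i]} ⊕ W_{[i]} indexed by the connection classes [i] ∈ I/∼. -/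
set_option maxHeartbeats 1000000

namespace QMBasis

variable {F : Type} [Field F] {G : Type} [AddCommGroup G] [DecidableEq G]
    {L : Type} [AddCommGroup L] [Module F L] {n : ℕ} {I : Type}
    {A : ColorGLT F G L n}

set_option linter.unusedSectionVars false
section Aux

variable {F : Type} [Field F] {G : Type} [AddCommGroup G] [DecidableEq G]
    {L : Type} [AddCommGroup L] [Module F L] {n : ℕ} {I : Type}
    {A : ColorGLT F G L n} (B : QMBasis A I)

/-! ### Fin/permutation helpers -/

theorem aux_cons_comp_cycleRange {α : Type*} {m : ℕ} (f : Fin (m + 1) → α) (s : Fin (m + 1)) :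
    ∀ u, (Fin.cons (f s) (fun v => f (s.succAbove v)) : Fin (m + 1) → α) (s.cycleRange u)
      = f u := by
  intro u
  rcases eq_or_ne u s with rfl | h
  · rw [Fin.cycleRange_self]; simp
  · obtain ⟨v, rfl⟩ := Fin.exists_succAbove_eq h
    rw [Fin.cycleRange_succAbove]; simp

/-- extend a permutation of `Fin (n+1)` to `Fin (n+2)` fixing `0`. -/
def auxConsPerm (σ : Equiv.Perm (Fin (n + 1))) : Equiv.Perm (Fin (n + 2)) :=
  Equiv.Perm.decomposeFin.symm (0, σ)

@[simp] theorem auxConsPerm_zero (σ : Equiv.Perm (Fin (n + 1))) : auxConsPerm σ 0 = 0 := by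
  simp [auxConsPerm]

@[simp] theorem auxConsPerm_succ (σ : Equiv.Perm (Fin (n + 1))) (u : Fin (n + 1)) :
    auxConsPerm σ u.succ = (σ u).succ := by
  simp [auxConsPerm, Equiv.Perm.decomposeFin_symm_apply_succ]

theorem aux_comp_swap01 {α : Type*} (a b : α) (r : Fin n → α) (u : Fin (n + 2)) :
    (Fin.cons a (Fin.cons b r) : Fin (n + 2) → α) (Equiv.swap 0 1 u)
      = (Fin.cons b (Fin.cons a r) : Fin (n + 2) → α) u := by
  rcases Fin.eq_zero_or_eq_succ u with rfl | ⟨v, rfl⟩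
  · simp [Equiv.swap_apply_left]
  · rcases Fin.eq_zero_or_eq_succ v with rfl | ⟨w, rfl⟩
    · have h0 : ((0 : Fin (n+1)).succ : Fin (n + 2)) = 1 := rfl
      rw [h0, Equiv.swap_apply_right]
      simp
    · have h1 : (w.succ.succ : Fin (n + 2)) ≠ 0 := Fin.succ_ne_zero _
      have h2 : (w.succ.succ : Fin (n + 2)) ≠ 1 := by
        simp [Fin.ext_iff, Fin.val_succ]
      rw [Equiv.swap_apply_of_ne_of_ne h1 h2]
      simp

/-- `update` as `insertNth`. -/
theorem aux_update_eq_insertNth (z : Fin (n + 2) → L) (p : Fin (n + 2)) (v : L) :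
    Function.update z p v = Fin.insertNth p v (fun u => z (p.succAbove u)) := by
  funext u
  rcases eq_or_ne u p with rfl | h
  · simp
  · obtain ⟨w, rfl⟩ := Fin.exists_succAbove_eq h
    rw [Fin.insertNth_apply_succAbove, Function.update_of_ne (Fin.succAbove_ne _ _)]

/-! ### aMem reindexing -/

theorem aux_aMem_reindex {σ : Equiv.Perm (Fin (n + 2))} {d d₁ : Fin (n + 2) → Option I}
    {x : Option I} (h : B.aMem σ d x) (π : Equiv.Perm (Fin (n + 2)))
    (hd : ∀ u, d u = d₁ (π u)) : B.aMem (σ.trans π) d₁ x := by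
  obtain ⟨⟨z, hz, hnz⟩, hall, hnone⟩ := h
  have key : ∀ t, d₁ ((σ.trans π) t) = d (σ t) := fun t => (hd (σ t)).symm
  refine ⟨⟨z, fun t => by rw [key]; exact hz t, hnz⟩,
    fun z' hz' => hall z' (fun t => by rw [← key]; exact hz' t), fun hx => ?_⟩
  rcases hnone hx with h1 | h1
  · left; intro t
    have := h1 (π.symm t)
    rwa [hd (π.symm t), Equiv.apply_symm_apply] at this
  · right; intro t
    have := h1 (π.symm t)
    rwa [hd (π.symm t), Equiv.apply_symm_apply] at this

theorem aux_aMem_cons (s : Fin (n + 2)) {d : Fin (n + 2) → Option I} {x : Option I}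
    (h : ∃ σ, B.aMem σ d x) :
    ∃ σ, B.aMem σ (Fin.cons (d s) (fun v => d (s.succAbove v))) x := by
  obtain ⟨σ, h⟩ := h
  exact ⟨σ.trans s.cycleRange,
    B.aux_aMem_reindex h s.cycleRange (fun u => (aux_cons_comp_cycleRange d s u).symm)⟩

end Aux
section Aux2

variable {F : Type} [Field F] {G : Type} [AddCommGroup G] [DecidableEq G]
    {L : Type} [AddCommGroup L] [Module F L] {n : ℕ} {I : Type}
    {A : ColorGLT F G L n}

/-- one-or-more-step reachability in the connection graph. -/
inductive Reaches (B : QMBasis A I) : (I ⊕ I) → I → Prop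
  | single {x : I ⊕ I} {y : I} (X : Tup I n)
      (h : B.muMem (Sum.map some some x) X (some y)) : Reaches B x y
  | consl {x : I ⊕ I} {y z : I} (X : Tup I n)
      (h : B.muMem (Sum.map some some x) X (some y))
      (h2 : Reaches B (Sum.inl y) z) : Reaches B x z
  | consr {x : I ⊕ I} {y z : I} (X : Tup I n)
      (h : B.muMem (Sum.map some some x) X (some y))
      (h2 : Reaches B (Sum.inr y) z) : Reaches B x z

variable (B : QMBasis A I)

theorem aux_phi_mono {s s' : Set (I ⊕ I)} (h : s ⊆ s') (X : Tup I n) :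
    B.phi s X ⊆ B.phi s' X := by
  rintro p ⟨i, hp, j, hj, hmu⟩
  exact ⟨i, hp, j, h hj, hmu⟩

theorem aux_chain_mono {s s' : Set (I ⊕ I)} (h : s ⊆ s') (Xs : List (Tup I n)) :
    B.chain s Xs ⊆ B.chain s' Xs := by
  induction Xs generalizing s s' with
  | nil => exact h
  | cons X r ih => exact ih (B.aux_phi_mono h X)

theorem aux_chain_elim (Xs : List (Tup I n)) :
    ∀ (s : Set (I ⊕ I)) (p : I ⊕ I), p ∈ B.chain s Xs → Xs ≠ [] →
      ∃ i₀ : I, (p = Sum.inl i₀ ∨ p = Sum.inr i₀) ∧ ∃ q ∈ s, Reaches B q i₀ := by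
  induction Xs with
  | nil => intro s p _ h; exact absurd rfl h
  | cons X r ih =>
    intro s p hp _
    rcases eq_or_ne r [] with rfl | hr
    · obtain ⟨i₀, hpi, j, hj, hmu⟩ := hp
      exact ⟨i₀, hpi, j, hj, Reaches.single X hmu⟩
    · obtain ⟨i₀, hpi, q', hq', hre⟩ := ih (B.phi s X) p hp hr
      obtain ⟨y, hq'y, j, hj, hmu⟩ := hq'
      rcases hq'y with rfl | rfl
      · exact ⟨i₀, hpi, j, hj, Reaches.consl X hmu hre⟩
      · exact ⟨i₀, hpi, j, hj, Reaches.consr X hmu hre⟩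

theorem aux_reaches_chain {st : I ⊕ I} {j : I} (h : Reaches B st j) :
    ∃ Xs : List (Tup I n), Xs ≠ [] ∧
      (∀ m, m < Xs.length → (B.chain {st} (Xs.take m)).Nonempty) ∧
      Sum.inl j ∈ B.chain {st} Xs ∧ Sum.inr j ∈ B.chain {st} Xs := by
  induction h with
  | @single x y X h =>
    refine ⟨[X], by simp, ?_, ?_, ?_⟩
    · intro m hm
      have hm0 : m = 0 := by simpa using Nat.lt_one_iff.mp (by simpa using hm)
      subst hm0
      exact ⟨x, rfl⟩
    · exact ⟨y, Or.inl rfl, x, rfl, h⟩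
    · exact ⟨y, Or.inr rfl, x, rfl, h⟩
  | @consl x y z X h h2 ih =>
    have hsub : ∀ st' : I ⊕ I, (st' = Sum.inl y ∨ st' = Sum.inr y) →
        ({st'} : Set (I ⊕ I)) ⊆ B.phi {x} X := by
      rintro st' h' p rfl
      rcases h' with rfl | rfl
      · exact ⟨y, Or.inl rfl, x, rfl, h⟩
      · exact ⟨y, Or.inr rfl, x, rfl, h⟩
    have key : ∀ st' : I ⊕ I, (st' = Sum.inl y ∨ st' = Sum.inr y) →
        (∃ Xs : List (Tup I n), Xs ≠ [] ∧
          (∀ m, m < Xs.length → (B.chain {st'} (Xs.take m)).Nonempty) ∧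
          Sum.inl z ∈ B.chain {st'} Xs ∧ Sum.inr z ∈ B.chain {st'} Xs) →
        ∃ Xs : List (Tup I n), Xs ≠ [] ∧
          (∀ m, m < Xs.length → (B.chain {x} (Xs.take m)).Nonempty) ∧
          Sum.inl z ∈ B.chain {x} Xs ∧ Sum.inr z ∈ B.chain {x} Xs := by
      rintro st' hst' ⟨Xs, hne, hpre, h1, h2⟩
      refine ⟨X :: Xs, by simp, ?_, ?_, ?_⟩
      · intro m hm
        match m with
        | 0 => exact ⟨x, rfl⟩
        | m' + 1 =>
          simp only [List.take_succ_cons]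
          obtain ⟨p, hp⟩ := hpre m' (by simpa using hm)
          exact ⟨p, B.aux_chain_mono (hsub st' hst') _ hp⟩
      · exact B.aux_chain_mono (hsub st' hst') _ h1
      · exact B.aux_chain_mono (hsub st' hst') _ h2
    exact key _ (Or.inl rfl) ih
  | @consr x y z X h h2 ih =>
    have hsub : ({Sum.inr y} : Set (I ⊕ I)) ⊆ B.phi {x} X := by
      rintro p rfl
      exact ⟨y, Or.inr rfl, x, rfl, h⟩
    obtain ⟨Xs, hne, hpre, h1, h2'⟩ := ih
    refine ⟨X :: Xs, by simp, ?_, ?_, ?_⟩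
    · intro m hm
      match m with
      | 0 => exact ⟨x, rfl⟩
      | m' + 1 =>
        simp only [List.take_succ_cons]
        obtain ⟨p, hp⟩ := hpre m' (by simpa using hm)
        exact ⟨p, B.aux_chain_mono hsub _ hp⟩
    · exact B.aux_chain_mono hsub _ h1
    · exact B.aux_chain_mono hsub _ h2'

theorem aux_connected_iff {i j : I} :
    B.Connected i j ↔ (i = j ∨ Reaches B (Sum.inl i) j ∨ Reaches B (Sum.inr i) j) := by
  constructor
  · rintro (rfl | ⟨Xs, st, hne, hst, _, hmem⟩)
    · exact Or.inl rfl
    · obtain ⟨i₀, hpi, q, hq, hre⟩ := B.aux_chain_elim Xs {st} _ hmem hne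
      rcases hpi with h | h
      · obtain rfl : j = i₀ := Sum.inl.inj h
        rcases hq with rfl
        rcases hst with rfl | rfl
        · exact Or.inr (Or.inl hre)
        · exact Or.inr (Or.inr hre)
      · exact absurd h (by simp)
  · rintro (rfl | hre | hre)
    · exact Or.inl rfl
    · obtain ⟨Xs, hne, hpre, h1, _⟩ := B.aux_reaches_chain hre
      exact Or.inr ⟨Xs, Sum.inl i, hne, Or.inl rfl, hpre, h1⟩
    · obtain ⟨Xs, hne, hpre, h1, _⟩ := B.aux_reaches_chain hre
      exact Or.inr ⟨Xs, Sum.inr i, hne, Or.inr rfl, hpre, h1⟩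

theorem aux_conn_refl (i : I) : B.Connected i i := Or.inl rfl

theorem aux_reaches_trans {x : I ⊕ I} {y z : I} (h : Reaches B x y)
    (h2 : Reaches B (Sum.inl y) z ∨ Reaches B (Sum.inr y) z) : Reaches B x z := by
  induction h with
  | single X h =>
    rcases h2 with r | r
    · exact Reaches.consl X h r
    · exact Reaches.consr X h r
  | consl X h h2' ih => exact Reaches.consl X h (ih h2)
  | consr X h h2' ih => exact Reaches.consr X h (ih h2)

theorem aux_step_rev {x : I ⊕ I} {X : Tup I n} {y : I}
    (h : B.muMem (Sum.map some some x) X (some y)) (i : I)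
    (hx : x = Sum.inl i ∨ x = Sum.inr i) :
    (∃ X', B.muMem (Sum.inl (some y)) X' (some i)) ∨
    (∃ X', B.muMem (Sum.inr (some y)) X' (some i)) := by
  obtain ⟨b, c⟩ := X
  rcases hx with rfl | rfl
  · cases b
    · exact Or.inl ⟨(true, c), h⟩
    · exact Or.inl ⟨(false, c), h⟩
  · cases b
    · obtain ⟨k, σ, hA⟩ := h
      refine Or.inr ⟨(false, c), k, σ.trans (Equiv.swap 0 1), ?_⟩
      exact B.aux_aMem_reindex hA (Equiv.swap 0 1)
        (fun u => (aux_comp_swap01 (some i) (some y)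
          (fun t => c (k.succAbove t)) u).symm)
    · exact absurd h (by simp [QMBasis.muMem])

end Aux2
section Aux3

variable {F : Type} [Field F] {G : Type} [AddCommGroup G] [DecidableEq G]
    {L : Type} [AddCommGroup L] [Module F L] {n : ℕ} {I : Type}
    {A : ColorGLT F G L n} (B : QMBasis A I)

theorem aux_reaches_symm {x : I ⊕ I} {j : I} (h : Reaches B x j) :
    ∀ i : I, (x = Sum.inl i ∨ x = Sum.inr i) →
      Reaches B (Sum.inl j) i ∨ Reaches B (Sum.inr j) i := by
  induction h with
  | @single x y X h =>
    intro i hx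
    rcases B.aux_step_rev h i hx with ⟨X', h'⟩ | ⟨X', h'⟩
    · exact Or.inl (Reaches.single X' h')
    · exact Or.inr (Reaches.single X' h')
  | @consl x y z X h h2 ih =>
    intro i hx
    have hyz := ih y (Or.inl rfl)
    have hstep : Reaches B (Sum.inl y) i ∨ Reaches B (Sum.inr y) i := by
      rcases B.aux_step_rev h i hx with ⟨X', h'⟩ | ⟨X', h'⟩
      · exact Or.inl (Reaches.single X' h')
      · exact Or.inr (Reaches.single X' h')
    rcases hyz with r | r
    · exact Or.inl (B.aux_reaches_trans r hstep)
    · exact Or.inr (B.aux_reaches_trans r hstep)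
  | @consr x y z X h h2 ih =>
    intro i hx
    have hyz := ih y (Or.inr rfl)
    have hstep : Reaches B (Sum.inl y) i ∨ Reaches B (Sum.inr y) i := by
      rcases B.aux_step_rev h i hx with ⟨X', h'⟩ | ⟨X', h'⟩
      · exact Or.inl (Reaches.single X' h')
      · exact Or.inr (Reaches.single X' h')
    rcases hyz with r | r
    · exact Or.inl (B.aux_reaches_trans r hstep)
    · exact Or.inr (B.aux_reaches_trans r hstep)

theorem aux_conn_symm {i j : I} (h : B.Connected i j) : B.Connected j i := by
  rw [aux_connected_iff] at h ⊢
  rcases h with rfl | h | h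
  · exact Or.inl rfl
  · exact Or.inr (B.aux_reaches_symm h i (Or.inl rfl))
  · exact Or.inr (B.aux_reaches_symm h i (Or.inr rfl))

theorem aux_conn_trans {i j k : I} (h : B.Connected i j) (h2 : B.Connected j k) :
    B.Connected i k := by
  rw [aux_connected_iff] at h h2 ⊢
  rcases h with rfl | h | h
  · exact h2
  all_goals rcases h2 with rfl | h2 | h2
  · exact Or.inr (Or.inl h)
  · exact Or.inr (Or.inl (B.aux_reaches_trans h (Or.inl h2)))
  · exact Or.inr (Or.inl (B.aux_reaches_trans h (Or.inr h2)))
  · exact Or.inr (Or.inr h)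
  · exact Or.inr (Or.inr (B.aux_reaches_trans h (Or.inl h2)))
  · exact Or.inr (Or.inr (B.aux_reaches_trans h (Or.inr h2)))

end Aux3
section Aux4

variable {F : Type} [Field F] {G : Type} [AddCommGroup G] [DecidableEq G]
    {L : Type} [AddCommGroup L] [Module F L] {n : ℕ} {I : Type}
    {A : ColorGLT F G L n} (B : QMBasis A I)

theorem aux_e_ne_zero (i : I) : B.e i ≠ 0 := B.e_indep.ne_zero i

theorem aux_e_inj : Function.Injective B.e := B.e_indep.injective

/-- The structural dichotomy: products of elements represented by a tuple `d` with at
least one basis entry land uniformly in a line, or `d` is all-basis. -/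
theorem aux_core (d : Fin (n + 2) → Option I) (t₀ : Fin (n + 2)) (h₀ : (d t₀).isSome) :
    (∃ j : I, ∀ z : Fin (n + 2) → L, (∀ t, z t ∈ B.elemSet (d t)) →
        A.bracket z ∈ Submodule.span F {B.e j}) ∨
    ((∀ t, (d t).isSome) ∧ ∀ z : Fin (n + 2) → L, (∀ t, z t ∈ B.elemSet (d t)) →
        A.bracket z ∈ B.V) := by
  by_cases hall : ∀ t, (d t).isSome
  · set c : Fin (n + 2) → I := fun t => (d t).get (hall t) with hc
    have hforce : ∀ z : Fin (n + 2) → L, (∀ t, z t ∈ B.elemSet (d t)) →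
        z = fun t => B.e (c t) := by
      intro z hz
      funext t
      have h1 := hz t
      rw [show d t = some (c t) from (Option.some_get (hall t)).symm] at h1
      exact h1
    rcases B.qm1 c with ⟨j, hj⟩ | hj
    · exact Or.inl ⟨j, fun z hz => by rw [hforce z hz]; exact hj⟩
    · exact Or.inr ⟨hall, fun z hz => by rw [hforce z hz]; exact hj⟩
  · push_neg at hall
    obtain ⟨t₁, ht₁⟩ := hall
    classical
    set Sf : Finset (Fin (n + 2)) := Finset.univ.filter (fun t => (d t).isSome) with hSf
    have hne : Sf.Nonempty := ⟨t₀, by simp [hSf, h₀]⟩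
    have hnequniv : Sf ≠ Finset.univ := by
      intro hEq
      have h2 : t₁ ∈ Sf := by rw [hEq]; exact Finset.mem_univ t₁
      rw [hSf] at h2
      simp at h2
      exact ht₁ h2
    set ind : Fin (n + 2) → I := fun t => (d t).getD ((d t₀).get h₀) with hind
    obtain ⟨j, hj⟩ := B.qm2 1 Sf hne hnequniv ind
    refine Or.inl ⟨j, fun z hz => ?_⟩
    have := hj z (fun t htS => ?_) (fun t htS => ?_)
    · simpa using this
    · have hsome : (d t).isSome := by simpa [hSf] using htS
      obtain ⟨a, ha⟩ := Option.isSome_iff_exists.mp hsome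
      have h1 := hz t
      rw [ha] at h1
      have h2 : ind t = a := by simp [hind, ha]
      rw [h2]
      exact h1
    · have hnone : d t = none := by
        have : ¬ (d t).isSome := by simpa [hSf] using htS
        exact Option.not_isSome_iff_eq_none.mp this
      have h1 := hz t
      rw [hnone] at h1
      exact h1

/-- connection from an entry of `d` to a line target. -/
theorem aux_conn_target {d : Fin (n + 2) → Option I} {j : I}
    (h : ∃ σ, B.aMem σ d (some j)) {s : Fin (n + 2)} {m : I} (hs : d s = some m) :
    B.Connected m j := by
  have h1 := B.aux_aMem_cons s h
  rw [hs] at h1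
  rw [aux_connected_iff]
  exact Or.inr (Or.inl (Reaches.single (X := (false, fun v => d (s.succAbove v))) h1))

/-- connection between any two entries of an all-basis tuple whose product lies in `V`. -/
theorem aux_conn_pair_of_none {d : Fin (n + 2) → Option I}
    (h : ∃ σ, B.aMem σ d none) {s t : Fin (n + 2)} {m m' : I}
    (hs : d s = some m) (ht : d t = some m') : B.Connected m m' := by
  rcases eq_or_ne s t with rfl | hst
  · rw [hs] at ht
    obtain rfl : m = m' := Option.some.inj ht
    exact B.aux_conn_refl m
  obtain ⟨s', hs'⟩ := Fin.exists_succAbove_eq hst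
  set g : Fin (n + 1) → Option I := fun u => d (t.succAbove u) with hg
  have hgs' : g s' = some m := by rw [hg]; simp only [hs']; exact hs
  set ρ : Equiv.Perm (Fin (n + 2)) := auxConsPerm s'.cycleRange with hρ
  set d₂ : Fin (n + 2) → Option I :=
    Fin.cons (some m') (Fin.cons (some m) (fun u => g (s'.succAbove u))) with hd₂
  have hd : ∀ u, d u = d₂ ((t.cycleRange.trans ρ) u) := by
    intro u
    rcases eq_or_ne u t with rfl | hu
    · rw [Equiv.trans_apply, Fin.cycleRange_self]
      have : ρ 0 = 0 := auxConsPerm_zero _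
      rw [this, hd₂, Fin.cons_zero, ht]
    · obtain ⟨v, rfl⟩ := Fin.exists_succAbove_eq hu
      rw [Equiv.trans_apply, Fin.cycleRange_succAbove, hρ, auxConsPerm_succ, hd₂,
        Fin.cons_succ]
      have := aux_cons_comp_cycleRange g s' v
      rw [hgs'] at this
      rw [this]
  obtain ⟨σ, hA⟩ := h
  have hA2 := B.aux_aMem_reindex hA (t.cycleRange.trans ρ) hd
  rw [aux_connected_iff]
  refine Or.inr (Or.inr (Reaches.single
    (X := (false, Fin.cons none (fun u => g (s'.succAbove u)))) ?_))
  show ∃ (k : Fin (n + 1)) (σ : Equiv.Perm (Fin (n + 2))), B.aMem σ _ _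
  refine ⟨0, σ.trans (t.cycleRange.trans ρ), ?_⟩
  have hrw : (fun u => (Fin.cons none (fun u => g (s'.succAbove u)) : Fin (n+1) → Option I)
      ((0 : Fin (n + 1)).succAbove u)) = fun u => g (s'.succAbove u) := by
    funext u
    rw [Fin.zero_succAbove, Fin.cons_succ]
  rw [Fin.cons_zero, hrw]
  exact hA2

/-- The master case analysis for a nonzero product matching a tuple `d`. -/
theorem aux_main_cases {d : Fin (n + 2) → Option I} {z : Fin (n + 2) → L}
    (hz : ∀ t, z t ∈ B.elemSet (d t)) (hnz : A.bracket z ≠ 0)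
    {t₀ : Fin (n + 2)} {m₀ : I} (h₀ : d t₀ = some m₀) :
    (∃ j : I, A.bracket z ∈ Submodule.span F {B.e j} ∧
        (∀ (s : Fin (n + 2)) (m : I), d s = some m → B.Connected m j)) ∨
    ((∀ t, (d t).isSome) ∧ A.bracket z ∈ B.V ∧
        (∀ (s t : Fin (n + 2)) (m m' : I), d s = some m → d t = some m' →
          B.Connected m m')) := by
  rcases B.aux_core d t₀ (by rw [h₀]; rfl) with ⟨j, hj⟩ | ⟨hall, hV⟩
  · have haM : ∃ σ, B.aMem σ d (some j) :=
      ⟨1, ⟨z, fun t => hz t, hnz⟩, fun z' hz' => hj z' (fun t => hz' t), by simp⟩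
    exact Or.inl ⟨j, hj z hz, fun s m hsm => B.aux_conn_target haM hsm⟩
  · have haM : ∃ σ, B.aMem σ d none :=
      ⟨1, ⟨z, fun t => hz t, hnz⟩, fun z' hz' => hV z' (fun t => hz' t),
        fun _ => Or.inl hall⟩
    exact Or.inr ⟨hall, hV z hz,
      fun s t m m' hsm htm => B.aux_conn_pair_of_none haM hsm htm⟩

end Aux4
section Aux5

variable {F : Type} [Field F] {G : Type} [AddCommGroup G] [DecidableEq G]
    {L : Type} [AddCommGroup L] [Module F L] {n : ℕ} {I : Type}
    {A : ColorGLT F G L n} (B : QMBasis A I)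

/-- a multilinear map evaluated at entries lying in spans lands in the span of its
values on tuples of generators (position-dependent generating sets). -/
theorem aux_multilin_span {N : ℕ} (f : MultilinearMap F (fun _ : Fin N => L) L)
    (s : Fin N → Set L) (m : Fin N → L) (hm : ∀ i, m i ∈ Submodule.span F (s i)) :
    f m ∈ Submodule.span F {y | ∃ z : Fin N → L, (∀ i, z i ∈ s i) ∧ y = f z} := by
  classical
  suffices h : ∀ (T : Finset (Fin N)) (m : Fin N → L),
      (∀ i, i ∈ T → m i ∈ Submodule.span F (s i)) → (∀ i, i ∉ T → m i ∈ s i) →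
      f m ∈ Submodule.span F {y | ∃ z : Fin N → L, (∀ i, z i ∈ s i) ∧ y = f z} by
    exact h Finset.univ m (fun i _ => hm i) (fun i hi => absurd (Finset.mem_univ i) hi)
  intro T
  induction T using Finset.induction_on with
  | empty =>
    intro m _ h2
    exact Submodule.subset_span ⟨m, fun i => h2 i (by simp), rfl⟩
  | @insert a T ha ih =>
    intro m h1 h2
    have key : ∀ x, x ∈ Submodule.span F (s a) →
        f (Function.update m a x) ∈ Submodule.span F
          {y | ∃ z : Fin N → L, (∀ i, z i ∈ s i) ∧ y = f z} := by
      intro x hx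
      induction hx using Submodule.span_induction with
      | mem w hw =>
        refine ih (Function.update m a w) (fun i hi => ?_) (fun i hi => ?_)
        · rw [Function.update_of_ne (fun hh => ha (by rw [← hh]; exact hi))]
          exact h1 i (Finset.mem_insert_of_mem hi)
        · rcases eq_or_ne i a with rfl | hia
          · rw [Function.update_self]; exact hw
          · rw [Function.update_of_ne hia]
            exact h2 i (by simp [hia, hi])
      | zero => rw [f.map_update_zero]; exact Submodule.zero_mem _
      | add w v _ _ hw hv => rw [f.map_update_add]; exact Submodule.add_mem _ hw hv
      | smul a' w _ hw => rw [f.map_update_smul]; exact Submodule.smul_mem _ _ hw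
    have hrw : f m = f (Function.update m a (m a)) := by rw [Function.update_eq_self]
    rw [hrw]
    exact key (m a) (h1 a (Finset.mem_insert_self a T))

/-- assign to each element of `V ∪ range e` an index tuple entry. -/
theorem aux_matchD (zz : Fin (n + 2) → L)
    (hzz : ∀ t, zz t ∈ B.V ∨ ∃ m, zz t = B.e m) :
    ∃ d : Fin (n + 2) → Option I, (∀ t, zz t ∈ B.elemSet (d t)) ∧
      (∀ t m, zz t = B.e m → d t = some m) := by
  classical
  refine ⟨fun t => if h : ∃ m, zz t = B.e m then some h.choose else none, fun t => ?_,
    fun t m hm => ?_⟩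
  · by_cases h : ∃ m, zz t = B.e m
    · simp only [dif_pos h]
      exact h.choose_spec
    · simp only [dif_neg h]
      rcases hzz t with hV | hE
      · exact hV
      · exact absurd hE h
  · have h : ∃ m', zz t = B.e m' := ⟨m, hm⟩
    simp only [dif_pos h]
    have h2 := h.choose_spec
    exact congrArg some (B.aux_e_inj (h2.symm.trans hm))

theorem aux_Wcls_le_Jcls (i : I) : B.Wcls i ≤ B.Jcls i := le_sup_right
theorem aux_Vcls_le_Jcls (i : I) : B.Vcls i ≤ B.Jcls i := le_sup_left

theorem aux_e_mem_Wcls {i j : I} (h : B.Connected i j) : B.e j ∈ B.Wcls i :=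
  Submodule.subset_span ⟨j, h, rfl⟩

/-- the key absorption lemma: a product of a tuple matching `d`, one of whose entries is
a basis element of the class of `i`, lies in `𝔍_{[i]}`. -/
theorem aux_mem_Jcls_of_entry {i : I} {d : Fin (n + 2) → Option I} {z : Fin (n + 2) → L}
    (hz : ∀ t, z t ∈ B.elemSet (d t)) {s : Fin (n + 2)} {m : I}
    (hs : d s = some m) (him : B.Connected i m) : A.bracket z ∈ B.Jcls i := by
  by_cases hnz : A.bracket z = 0
  · rw [hnz]; exact Submodule.zero_mem _
  rcases B.aux_main_cases hz hnz hs with ⟨j, hjspan, hconn⟩ | ⟨hall, hV, hconn⟩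
  · have : B.e j ∈ B.Wcls i :=
      B.aux_e_mem_Wcls (B.aux_conn_trans him (hconn s m hs))
    exact B.aux_Wcls_le_Jcls i
      (Submodule.span_le.mpr (Set.singleton_subset_iff.mpr this) hjspan)
  · set c : Fin (n + 2) → I := fun t => (d t).get (hall t) with hc
    have hforce : z = fun t => B.e (c t) := by
      funext t
      have h1 := hz t
      rw [show d t = some (c t) from (Option.some_get (hall t)).symm] at h1
      exact h1
    have hcc : ∀ t, c t ∈ B.cls i := by
      intro t
      exact B.aux_conn_trans him (hconn s t m (c t) hs (Option.some_get (hall t)).symm)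
    refine B.aux_Vcls_le_Jcls i (Submodule.mem_inf.mpr ⟨?_, hV⟩)
    exact Submodule.subset_span ⟨c, hcc, by rw [hforce]⟩

end Aux5
section Aux6

variable {F : Type} [Field F] {G : Type} [AddCommGroup G] [DecidableEq G]
    {L : Type} [AddCommGroup L] [Module F L] {n : ℕ} {I : Type}
    {A : ColorGLT F G L n}

/-- refined elements: homogeneous elements of `V`, and basis elements. -/
def auxRef (B : QMBasis A I) : Set L :=
  (⋃ g : G, ((B.V ⊓ A.grading g : Submodule F L) : Set L)) ∪ Set.range B.e

variable (B : QMBasis A I)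

theorem aux_ref_span_top : Submodule.span F (auxRef B) = ⊤ := by
  refine le_antisymm le_top ?_
  rw [← B.compl.sup_eq_top]
  refine sup_le ?_ ?_
  · conv_lhs => rw [B.V_graded]
    rw [Submodule.iSup_eq_span]
    exact Submodule.span_mono Set.subset_union_left
  · rw [← B.e_span]
    exact Submodule.span_mono Set.subset_union_right

theorem aux_ref_cases {u : L} (h : u ∈ auxRef B) :
    (u ∈ B.V ∨ ∃ m, u = B.e m) ∧ ∃ g, u ∈ A.grading g := by
  rcases h with h | h
  · obtain ⟨sg, ⟨g, rfl⟩, hu⟩ := h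
    have hu' : u ∈ (B.V ⊓ A.grading g : Submodule F L) := hu
    exact ⟨Or.inl (Submodule.mem_inf.mp hu').1, g, (Submodule.mem_inf.mp hu').2⟩
  · obtain ⟨m, rfl⟩ := h
    exact ⟨Or.inr ⟨m, rfl⟩, B.deg m, B.e_homog m⟩

theorem aux_update_insertNth (p : Fin (n + 2)) (x v : L) (y : Fin (n + 1) → L) :
    Function.update (Fin.insertNth (α := fun _ => L) p x y) p v
      = Fin.insertNth (α := fun _ => L) p v y := by
  funext u
  rcases eq_or_ne u p with rfl | h
  · simp
  · obtain ⟨w, rfl⟩ := Fin.exists_succAbove_eq h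
    rw [Function.update_of_ne (Fin.succAbove_ne _ _), Fin.insertNth_apply_succAbove,
      Fin.insertNth_apply_succAbove]

theorem aux_bracket_insertNth_smul (p : Fin (n + 2)) (lam : F) (v : L)
    (y : Fin (n + 1) → L) :
    A.bracket (Fin.insertNth (α := fun _ => L) p (lam • v) y)
      = lam • A.bracket (Fin.insertNth (α := fun _ => L) p v y) := by
  rw [← aux_update_insertNth p v (lam • v) y, MultilinearMap.map_update_smul,
    aux_update_insertNth p v v y]

theorem aux_glt_span (k : Fin (n + 2)) (x : Fin (n + 2) → L) (y : Fin (n + 1) → L)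
    (gx : Fin (n + 2) → G) (gy : Fin (n + 1) → G)
    (hx : ∀ t, x t ∈ A.grading (gx t)) (hy : ∀ t, y t ∈ A.grading (gy t))
    (S : Submodule F L)
    (hterm : ∀ (i₁ j : Fin (n + 2)) (σ₁ : Equiv.Perm (Fin (n + 2)))
      (σ₂ : Equiv.Perm (Fin (n + 1))),
      A.bracket (Function.update (fun t => x (σ₁ t)) i₁
        (A.bracket (Fin.insertNth j (x (σ₁ i₁)) (fun t => y (σ₂ t))))) ∈ S) :
    A.bracket (Fin.insertNth k (A.bracket x) y) ∈ S := by
  rw [A.glt k gx gy x y hx hy]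
  exact Submodule.sum_mem _ fun i₁ _ => Submodule.sum_mem _ fun j _ =>
    Submodule.sum_mem _ fun σ₁ _ => Submodule.sum_mem _ fun σ₂ _ =>
      Submodule.smul_mem _ _ (hterm i₁ j σ₁ σ₂)

theorem aux_exists_ne (i₁ : Fin (n + 2)) : ∃ t : Fin (n + 2), t ≠ i₁ := by
  rcases eq_or_ne i₁ 0 with rfl | h
  · exact ⟨1, by simp [Fin.ext_iff]⟩
  · exact ⟨0, Ne.symm h⟩

theorem aux_matchD_insert (j₂ : Fin (n + 2)) (m' : I) (y : Fin (n + 1) → L)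
    (hy : ∀ u, y u ∈ B.V ∨ ∃ m, y u = B.e m) :
    ∃ d : Fin (n + 2) → Option I,
      (∀ t, (Fin.insertNth (α := fun _ => L) j₂ (B.e m') y) t ∈ B.elemSet (d t)) ∧
      d j₂ = some m' := by
  have hzz : ∀ t, (Fin.insertNth (α := fun _ => L) j₂ (B.e m') y) t ∈ B.V ∨
      ∃ m, (Fin.insertNth (α := fun _ => L) j₂ (B.e m') y) t = B.e m := by
    intro t
    rcases eq_or_ne t j₂ with rfl | h
    · rw [Fin.insertNth_apply_same]
      exact Or.inr ⟨m', rfl⟩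
    · obtain ⟨w, rfl⟩ := Fin.exists_succAbove_eq h
      rw [Fin.insertNth_apply_succAbove]
      exact hy w
  obtain ⟨d, hd1, hd2⟩ := B.aux_matchD _ hzz
  exact ⟨d, hd1, hd2 j₂ m' (Fin.insertNth_apply_same (α := fun _ => L) j₂ (B.e m') y)⟩

/-- products with one nested all-basis bracket of class `[i]` and refined entries lie in
`𝔍_{[i]}`. -/
theorem aux_nested (i : I) (c : Fin (n + 2) → I) (hcc : ∀ t, B.Connected i (c t))
    (y : Fin (n + 1) → L) (hy : ∀ u, y u ∈ auxRef B) (p₀ : Fin (n + 2)) :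
    A.bracket (Fin.insertNth p₀ (A.bracket (fun t => B.e (c t))) y) ∈ B.Jcls i := by
  rcases B.qm1 c with ⟨j, hj⟩ | hj
  · obtain ⟨lam, hlam⟩ := Submodule.mem_span_singleton.mp hj
    rw [← hlam, aux_bracket_insertNth_smul]
    rcases eq_or_ne lam 0 with rfl | hlam0
    · rw [zero_smul]; exact Submodule.zero_mem _
    have hnz : A.bracket (fun t => B.e (c t)) ≠ 0 := by
      rw [← hlam]
      simp [hlam0, B.aux_e_ne_zero j]
    have haM : ∃ σ, B.aMem σ (fun t => some (c t)) (some j) := by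
      refine ⟨1, ⟨fun t => B.e (c t), fun t => rfl, hnz⟩, fun z' hz' => ?_, by simp⟩
      have hforce : z' = fun t => B.e (c t) := funext fun t => hz' t
      rw [hforce]
      exact hj
    have hij : B.Connected i j :=
      B.aux_conn_trans (hcc 0) (B.aux_conn_target haM (s := 0) rfl)
    obtain ⟨d, hd1, hd2⟩ := B.aux_matchD_insert p₀ j y
      (fun u => (aux_ref_cases B (hy u)).1)
    exact Submodule.smul_mem _ _ (B.aux_mem_Jcls_of_entry hd1 hd2 hij)
  · -- nested product lies in V : use the gLt identity
    have hyh : ∀ u, ∃ g, y u ∈ A.grading g := fun u => (aux_ref_cases B (hy u)).2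
    choose gy hgy using hyh
    refine aux_glt_span p₀ _ y (fun t => B.deg (c t)) gy (fun t => B.e_homog (c t)) hgy
      (B.Jcls i) ?_
    intro i₁ j₂ σ₁ σ₂
    rcases eq_or_ne (A.bracket (Fin.insertNth (α := fun _ => L) j₂ (B.e (c (σ₁ i₁)))
      (fun t => y (σ₂ t)))) 0 with hz0 | hnz
    · rw [hz0, MultilinearMap.map_update_zero]
      exact Submodule.zero_mem _
    obtain ⟨din, hdin1, hdin2⟩ := B.aux_matchD_insert j₂ (c (σ₁ i₁)) (fun t => y (σ₂ t))
      (fun u => (aux_ref_cases B (hy (σ₂ u))).1)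
    rcases B.aux_main_cases hdin1 hnz hdin2 with ⟨j₀, hspan, hconn⟩ | ⟨_, hV, _⟩
    · have hij₀ : B.Connected i j₀ :=
        B.aux_conn_trans (hcc (σ₁ i₁)) (hconn j₂ _ hdin2)
      obtain ⟨lam, hlam⟩ := Submodule.mem_span_singleton.mp hspan
      rw [← hlam, MultilinearMap.map_update_smul]
      refine Submodule.smul_mem _ _ ?_
      refine B.aux_mem_Jcls_of_entry (d := Function.update
        (fun t => some (c (σ₁ t))) i₁ (some j₀)) ?_ (Function.update_self _ _ _) hij₀
      intro t
      rcases eq_or_ne t i₁ with rfl | h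
      · rw [Function.update_self, Function.update_self]
        rfl
      · rw [Function.update_of_ne h, Function.update_of_ne h]
        rfl
    · obtain ⟨t₁, ht₁⟩ := aux_exists_ne i₁
      refine B.aux_mem_Jcls_of_entry (d := Function.update
        (fun t => some (c (σ₁ t))) i₁ none) (s := t₁) ?_ ?_ (hcc (σ₁ t₁))
      · intro t
        rcases eq_or_ne t i₁ with rfl | h
        · rw [Function.update_self, Function.update_self]
          exact hV
        · rw [Function.update_of_ne h, Function.update_of_ne h]
          rfl
      · rw [Function.update_of_ne ht₁]

/-- main absorption: if one entry of a bracket lies in `𝔍_{[i]}`, so does the bracket. -/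
theorem aux_bracket_mem_Jcls (i : I) (w : Fin (n + 2) → L) (p₀ : Fin (n + 2))
    (h : w p₀ ∈ B.Jcls i) : A.bracket w ∈ B.Jcls i := by
  classical
  set s : Fin (n + 2) → Set L := fun t => if t = p₀ then {w p₀} else auxRef B with hs
  have hm : ∀ t, w t ∈ Submodule.span F (s t) := by
    intro t
    rcases eq_or_ne t p₀ with rfl | h'
    · rw [hs]; simp only [if_pos rfl]
      exact Submodule.subset_span rfl
    · rw [hs]; simp only [if_neg h']
      rw [aux_ref_span_top]
      exact Submodule.mem_top
  refine Submodule.span_le.mpr ?_ (aux_multilin_span A.bracket s w hm)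
  rintro _ ⟨z, hz, rfl⟩
  simp only [SetLike.mem_coe]
  have hzp : z p₀ = w p₀ := by
    have := hz p₀
    rw [hs] at this
    simpa using this
  have hzref : ∀ u : Fin (n + 1), z (p₀.succAbove u) ∈ auxRef B := by
    intro u
    have := hz (p₀.succAbove u)
    rw [hs] at this
    simpa [Fin.succAbove_ne p₀ u] using this
  -- split z p₀ ∈ Vcls ⊔ Wcls
  have h' : w p₀ ∈ B.Vcls i ⊔ B.Wcls i := h
  obtain ⟨a, ha, b, hb, hab⟩ := Submodule.mem_sup.mp h' 
  have hzup : z = Function.update z p₀ (a + b) := by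
    rw [hab, ← hzp, Function.update_eq_self]
  rw [hzup, MultilinearMap.map_update_add]
  refine Submodule.add_mem _ ?_ ?_
  · -- Vcls part
    have ha1 := (Submodule.mem_inf.mp ha).1
    clear hzup hab ha h h' 
    induction ha1 using Submodule.span_induction with
    | mem x hx =>
      obtain ⟨c, hcc, rfl⟩ := hx
      rw [aux_update_eq_insertNth]
      exact B.aux_nested i c hcc _ hzref p₀
    | zero => rw [MultilinearMap.map_update_zero]; exact Submodule.zero_mem _
    | add x y' _ _ hx hy' =>
      rw [MultilinearMap.map_update_add]
      exact Submodule.add_mem _ hx hy'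
    | smul lam x _ hx =>
      rw [MultilinearMap.map_update_smul]
      exact Submodule.smul_mem _ _ hx
  · -- Wcls part
    clear hzup hab
    induction hb using Submodule.span_induction with
    | mem x hx =>
      obtain ⟨m', hm', rfl⟩ := hx
      rw [aux_update_eq_insertNth]
      obtain ⟨d, hd1, hd2⟩ := B.aux_matchD_insert p₀ m' _
        (fun u => (aux_ref_cases B (hzref u)).1)
      exact B.aux_mem_Jcls_of_entry hd1 hd2 hm'
    | zero => rw [MultilinearMap.map_update_zero]; exact Submodule.zero_mem _
    | add x y' _ _ hx hy' =>
      rw [MultilinearMap.map_update_add]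
      exact Submodule.add_mem _ hx hy'
    | smul lam x _ hx =>
      rw [MultilinearMap.map_update_smul]
      exact Submodule.smul_mem _ _ hx

end Aux6
section Aux7

variable {F : Type} [Field F] {G : Type} [AddCommGroup G] [DecidableEq G]
    {L : Type} [AddCommGroup L] [Module F L] {n : ℕ} {I : Type}
    {A : ColorGLT F G L n} (B : QMBasis A I)

theorem aux_components_zero (f : G →₀ L) (hf : ∀ g, f g ∈ A.grading g)
    (hsum : (f.sum fun _ x => x) = 0) : f = 0 := by
  ext g₀
  by_cases hg₀ : g₀ ∈ f.support
  · have hindep := A.isInternal.submodule_iSupIndep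
    have hsplit : f g₀ + ∑ g ∈ f.support.erase g₀, f g = 0 := by
      rw [Finset.add_sum_erase _ _ hg₀]
      exact hsum
    have hmem : f g₀ ∈ ⨆ (j) (_ : j ≠ g₀), A.grading j := by
      have : f g₀ = -∑ g ∈ f.support.erase g₀, f g := by
        rw [eq_neg_iff_add_eq_zero]; exact hsplit
      rw [this]
      refine Submodule.neg_mem _ (Submodule.sum_mem _ fun g hg => ?_)
      exact le_iSup₂ (f := fun (j : G) (_ : j ≠ g₀) => A.grading j) g
        (Finset.ne_of_mem_erase hg) (hf g)
    have := (hindep g₀).le_bot (Submodule.mem_inf.mpr ⟨hf g₀, hmem⟩)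
    simpa using this
  · simpa using Finsupp.notMem_support_iff.mp hg₀

theorem aux_component_eq (f f' : G →₀ L) (hf : ∀ g, f g ∈ A.grading g)
    (hf' : ∀ g, f' g ∈ A.grading g)
    (hsum : (f.sum fun _ x => x) = (f'.sum fun _ x => x)) : f = f' := by
  have h0 : ((f - f').sum fun _ x => x) = 0 := by
    rw [Finsupp.sum_sub_index (fun _ _ _ => rfl), hsum, sub_self]
  have hz := aux_components_zero (f - f') (fun g => by
    rw [Finsupp.sub_apply]; exact Submodule.sub_mem _ (hf g) (hf' g)) h0
  exact sub_eq_zero.mp hz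

theorem aux_graded_span (S : Set L) (hS : ∀ z ∈ S, ∃ g, z ∈ A.grading g) :
    Submodule.span F S ≤ ⨆ g : G, Submodule.span F S ⊓ A.grading g := by
  refine Submodule.span_le.mpr fun z hz => ?_
  obtain ⟨g, hg⟩ := hS z hz
  exact le_iSup (fun g => Submodule.span F S ⊓ A.grading g) g
    (Submodule.mem_inf.mpr ⟨Submodule.subset_span hz, hg⟩)

theorem aux_Vcls_graded (i : I) : B.Vcls i ≤ ⨆ g : G, B.Vcls i ⊓ A.grading g := by
  intro x hx
  have h1 := (Submodule.mem_inf.mp hx).1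
  have h2 := (Submodule.mem_inf.mp hx).2
  set Sgen : Set L := {z : L | ∃ c : Fin (n + 2) → I,
    (∀ t, c t ∈ B.cls i) ∧ z = A.bracket (fun t => B.e (c t))} with hSgen
  have hhom : ∀ z ∈ Sgen, ∃ g, z ∈ A.grading g := by
    rintro z ⟨c, _, rfl⟩
    exact ⟨∑ t, B.deg (c t), A.bracket_graded _ _ fun t => B.e_homog (c t)⟩
  have hxg := aux_graded_span Sgen hhom h1
  obtain ⟨f, hfmem, hfsum⟩ := (Submodule.mem_iSup_iff_exists_finsupp _ x).mp hxg
  have hxv : x ∈ ⨆ g : G, B.V ⊓ A.grading g := by rw [← B.V_graded]; exact h2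
  obtain ⟨f', hfmem', hfsum'⟩ := (Submodule.mem_iSup_iff_exists_finsupp _ x).mp hxv
  have hff' : f = f' := aux_component_eq f f'
    (fun g => (Submodule.mem_inf.mp (hfmem g)).2)
    (fun g => (Submodule.mem_inf.mp (hfmem' g)).2)
    (by rw [hfsum, hfsum'])
  rw [← hfsum]
  refine Submodule.sum_mem _ fun g _ => ?_
  refine le_iSup (fun g => B.Vcls i ⊓ A.grading g) g (Submodule.mem_inf.mpr
    ⟨Submodule.mem_inf.mpr ⟨(Submodule.mem_inf.mp (hfmem g)).1, ?_⟩,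
      (Submodule.mem_inf.mp (hfmem g)).2⟩)
  rw [hff']
  exact (Submodule.mem_inf.mp (hfmem' g)).1

theorem aux_Jcls_graded (i : I) : B.Jcls i = ⨆ g : G, B.Jcls i ⊓ A.grading g := by
  refine le_antisymm ?_ (iSup_le fun g => inf_le_left)
  refine sup_le ?_ ?_
  · refine (B.aux_Vcls_graded i).trans (iSup_mono fun g => ?_)
    exact inf_le_inf_right _ (B.aux_Vcls_le_Jcls i)
  · refine Submodule.span_le.mpr ?_
    rintro _ ⟨m, hm, rfl⟩
    exact le_iSup (fun g => B.Jcls i ⊓ A.grading g) (B.deg m) (Submodule.mem_inf.mpr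
      ⟨B.aux_Wcls_le_Jcls i (B.aux_e_mem_Wcls hm), B.e_homog m⟩)

theorem aux_Jcls_isIdeal (i : I) : A.IsIdeal (B.Jcls i) := by
  refine ⟨B.aux_Jcls_graded i, fun σ x hx => ?_⟩
  refine B.aux_bracket_mem_Jcls i (fun t => x (σ t)) (σ.symm 0) ?_
  show x (σ (σ.symm 0)) ∈ B.Jcls i
  rw [Equiv.apply_symm_apply]
  exact hx

theorem aux_Jcls_basis (i : I) : B.HasInheritedBasis (B.Jcls i) :=
  ⟨B.Vcls i, B.cls i, inf_le_right, ⟨i, B.aux_conn_refl i⟩, rfl⟩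

theorem aux_sup_top (ht : B.Tight) : (⨆ i : I, B.Jcls i) = ⊤ := by
  refine le_antisymm le_top ?_
  rw [← B.compl.sup_eq_top]
  refine sup_le ?_ ?_
  · rcases ht with hV | hV
    · rw [hV]; exact bot_le
    rw [hV]
    refine Submodule.span_le.mpr ?_
    rintro _ ⟨c, hset, rfl⟩
    simp only [SetLike.mem_coe]
    have hnone : (none : Option I) ∈ {x : Option I | ∃ σ, B.aMem σ (fun t => some (c t)) x} := by
      rw [hset]; rfl
    obtain ⟨σ₀, hA⟩ := hnone
    by_cases h0 : A.bracket (fun t => B.e (c t)) = 0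
    · rw [h0]; exact Submodule.zero_mem _
    have hjV : A.bracket (fun t => B.e (c t)) ∈ B.V := by
      rcases B.qm1 c with ⟨j, hj⟩ | hj
      · exfalso
        have hmemJ : (some j : Option I) ∈
            {x : Option I | ∃ σ, B.aMem σ (fun t => some (c t)) x} := by
          refine ⟨1, ⟨fun t => B.e (c t), fun t => rfl, h0⟩, fun z' hz' => ?_, by simp⟩
          rw [show z' = fun t => B.e (c t) from funext fun t => hz' t]
          exact hj
        rw [hset] at hmemJ
        simp at hmemJ
      · exact hj
    have hconn : ∀ t, c t ∈ B.cls (c 0) := fun t =>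
      B.aux_conn_pair_of_none (d := fun t => some (c t)) ⟨σ₀, hA⟩ rfl rfl
    refine le_iSup B.Jcls (c 0) (B.aux_Vcls_le_Jcls (c 0) (Submodule.mem_inf.mpr
      ⟨Submodule.subset_span ⟨c, hconn, rfl⟩, hjV⟩))
  · rw [← B.e_span]
    refine Submodule.span_le.mpr ?_
    rintro _ ⟨j, rfl⟩
    exact le_iSup B.Jcls j (B.aux_Wcls_le_Jcls j (B.aux_e_mem_Wcls (B.aux_conn_refl j)))

end Aux7
section Aux8

variable {F : Type} [Field F] {G : Type} [AddCommGroup G] [DecidableEq G]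
    {L : Type} [AddCommGroup L] [Module F L] {n : ℕ} {I : Type}
    {A : ColorGLT F G L n} (B : QMBasis A I)

theorem aux_eq_insertNth (f : Fin (n + 2) → L) (p : Fin (n + 2)) :
    f = Fin.insertNth (α := fun _ => L) p (f p) (fun u => f (p.succAbove u)) := by
  funext u
  rcases eq_or_ne u p with rfl | h
  · rw [Fin.insertNth_apply_same]
  · obtain ⟨w, rfl⟩ := Fin.exists_succAbove_eq h
    rw [Fin.insertNth_apply_succAbove]

theorem aux_zero_ee {m₁ m₂ : I} (hnc : ¬ B.Connected m₁ m₂) (zz : Fin (n + 2) → L)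
    (hzz : ∀ t, zz t ∈ B.V ∨ ∃ m, zz t = B.e m) {r₁ r₂ : Fin (n + 2)}
    (h1 : zz r₁ = B.e m₁) (h2 : zz r₂ = B.e m₂) : A.bracket zz = 0 := by
  by_contra hnz
  obtain ⟨d, hd1, hd2⟩ := B.aux_matchD zz hzz
  rcases B.aux_main_cases hd1 hnz (hd2 r₁ m₁ h1) with ⟨j₀, _, hconn⟩ | ⟨_, _, hconnall⟩
  · exact hnc (B.aux_conn_trans (hconn r₁ m₁ (hd2 r₁ m₁ h1))
      (B.aux_conn_symm (hconn r₂ m₂ (hd2 r₂ m₂ h2))))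
  · exact hnc (hconnall r₁ r₂ m₁ m₂ (hd2 r₁ m₁ h1) (hd2 r₂ m₂ h2))

theorem aux_zero_nested_e {m₁ : I} (c' : Fin (n + 2) → I)
    (hfor : ∀ t, ¬ B.Connected (c' t) m₁)
    (y : Fin (n + 1) → L) (u₀ : Fin (n + 1)) (hy0 : y u₀ = B.e m₁)
    (hyref : ∀ u, u ≠ u₀ → y u ∈ auxRef B) (q : Fin (n + 2)) :
    A.bracket (Fin.insertNth (α := fun _ => L) q
      (A.bracket (fun t => B.e (c' t))) y) = 0 := by
  classical
  have hgy : ∀ u, ∃ g, y u ∈ A.grading g := fun u =>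
    if h : u = u₀ then ⟨B.deg m₁, by rw [h, hy0]; exact B.e_homog m₁⟩
    else (aux_ref_cases B (hyref u h)).2
  choose gy hgy using hgy
  have hmem := aux_glt_span q _ y (fun t => B.deg (c' t)) gy
    (fun t => B.e_homog (c' t)) hgy ⊥ ?_
  · simpa using hmem
  intro i₁ j₂ σ₁ σ₂
  have hz : A.bracket (Fin.insertNth (α := fun _ => L) j₂ (B.e (c' (σ₁ i₁)))
      (fun t => y (σ₂ t))) = 0 := by
    set zin : Fin (n + 2) → L :=
      Fin.insertNth (α := fun _ => L) j₂ (B.e (c' (σ₁ i₁))) (fun t => y (σ₂ t)) with hzin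
    have hzz : ∀ t, zin t ∈ B.V ∨ ∃ m, zin t = B.e m := by
      intro t
      rcases eq_or_ne t j₂ with rfl | h
      · rw [hzin, Fin.insertNth_apply_same]
        exact Or.inr ⟨_, rfl⟩
      · obtain ⟨w, rfl⟩ := Fin.exists_succAbove_eq h
        rw [hzin, Fin.insertNth_apply_succAbove]
        rcases eq_or_ne (σ₂ w) u₀ with hw | hw
        · rw [hw, hy0]; exact Or.inr ⟨_, rfl⟩
        · exact (aux_ref_cases B (hyref _ hw)).1
    have hval1 : zin j₂ = B.e (c' (σ₁ i₁)) := by rw [hzin, Fin.insertNth_apply_same]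
    have hval2 : zin (j₂.succAbove (σ₂.symm u₀)) = B.e m₁ := by
      rw [hzin, Fin.insertNth_apply_succAbove]
      simp [hy0]
    exact B.aux_zero_ee (hfor (σ₁ i₁)) zin hzz hval1 hval2
  rw [hz, MultilinearMap.map_update_zero]
  exact Submodule.zero_mem _

theorem aux_zero_nested_V (c c' : Fin (n + 2) → I)
    (hnc : ∀ s t, ¬ B.Connected (c s) (c' t))
    (y : Fin (n + 1) → L) (u₀ : Fin (n + 1))
    (hy0 : y u₀ = A.bracket (fun t => B.e (c t)))
    (hyref : ∀ u, u ≠ u₀ → y u ∈ auxRef B) (q : Fin (n + 2)) :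
    A.bracket (Fin.insertNth (α := fun _ => L) q
      (A.bracket (fun t => B.e (c' t))) y) = 0 := by
  classical
  have hgy : ∀ u, ∃ g, y u ∈ A.grading g := fun u =>
    if h : u = u₀ then ⟨∑ t, B.deg (c t),
      by rw [h, hy0]; exact A.bracket_graded _ _ fun t => B.e_homog (c t)⟩
    else (aux_ref_cases B (hyref u h)).2
  choose gy hgy using hgy
  have hmem := aux_glt_span q _ y (fun t => B.deg (c' t)) gy
    (fun t => B.e_homog (c' t)) hgy ⊥ ?_
  · simpa using hmem
  intro i₁ j₂ σ₁ σ₂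
  have hz : A.bracket (Fin.insertNth (α := fun _ => L) j₂ (B.e (c' (σ₁ i₁)))
      (fun t => y (σ₂ t))) = 0 := by
    set zin : Fin (n + 2) → L :=
      Fin.insertNth (α := fun _ => L) j₂ (B.e (c' (σ₁ i₁))) (fun t => y (σ₂ t)) with hzin
    set r : Fin (n + 2) := j₂.succAbove (σ₂.symm u₀) with hr
    have hrj : r ≠ j₂ := Fin.succAbove_ne j₂ _
    have hzr : zin r = A.bracket (fun t => B.e (c t)) := by
      rw [hzin, hr, Fin.insertNth_apply_succAbove]
      simp [hy0]
    obtain ⟨u₁, hu₁⟩ := Fin.exists_succAbove_eq (Ne.symm hrj)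
    have hrw := aux_eq_insertNth zin r
    rw [hrw, hzr]
    refine B.aux_zero_nested_e c (fun t => hnc t (σ₁ i₁)) _ u₁ ?_ ?_ r
    · rw [hu₁, hzin, Fin.insertNth_apply_same]
    · intro u hu
      have hne1 : r.succAbove u ≠ j₂ := by
        rw [← hu₁]
        exact fun hh => hu (r.succAbove_right_injective hh)
      obtain ⟨v, hv⟩ := Fin.exists_succAbove_eq hne1
      have : zin (r.succAbove u) = y (σ₂ v) := by
        rw [hzin, ← hv, Fin.insertNth_apply_succAbove]
      rw [this]
      refine hyref _ (fun hv0 => ?_)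
      have h3 : j₂.succAbove v = r := by rw [hr, ← hv0, Equiv.symm_apply_apply]
      exact (Fin.succAbove_ne r u) (hv.symm.trans h3)
  rw [hz, MultilinearMap.map_update_zero]
  exact Submodule.zero_mem _

end Aux8
section Aux9

variable {F : Type} [Field F] {G : Type} [AddCommGroup G] [DecidableEq G]
    {L : Type} [AddCommGroup L] [Module F L] {n : ℕ} {I : Type}
    {A : ColorGLT F G L n} (B : QMBasis A I)

/-- the elementary mixed-class vanishing: a bracket with elementary entries of two
non-connected classes at two positions and refined entries elsewhere vanishes. -/
theorem aux_zero_two (z : Fin (n + 2) → L) (p q : Fin (n + 2)) (hpq : p ≠ q)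
    (hother : ∀ t, t ≠ p → t ≠ q → z t ∈ auxRef B) (a b : I)
    (hnab : ¬ B.Connected a b)
    (hP : (∃ m, B.Connected a m ∧ z p = B.e m) ∨
      (∃ c : Fin (n + 2) → I, (∀ t, B.Connected a (c t)) ∧
        z p = A.bracket (fun t => B.e (c t)) ∧ A.bracket (fun t => B.e (c t)) ∈ B.V))
    (hQ : (∃ m, B.Connected b m ∧ z q = B.e m) ∨
      (∃ c : Fin (n + 2) → I, (∀ t, B.Connected b (c t)) ∧
        z q = A.bracket (fun t => B.e (c t)) ∧ A.bracket (fun t => B.e (c t)) ∈ B.V)) :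
    A.bracket z = 0 := by
  rcases hP with ⟨ma, hma, hzp⟩ | ⟨c, hc, hzp, hcV⟩
  · rcases hQ with ⟨mb, hmb, hzq⟩ | ⟨c', hc', hzq, hc'V⟩
    · -- e / e
      refine B.aux_zero_ee (m₁ := ma) (m₂ := mb) ?_ z ?_ hzp hzq
      · intro h
        exact hnab (B.aux_conn_trans (B.aux_conn_trans hma h) (B.aux_conn_symm hmb))
      · intro t
        rcases eq_or_ne t p with rfl | htp
        · exact Or.inr ⟨ma, hzp⟩
        rcases eq_or_ne t q with rfl | htq
        · exact Or.inr ⟨mb, hzq⟩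
        · exact (aux_ref_cases B (hother t htp htq)).1
    · -- e at p, nested at q
      obtain ⟨u₀, hu₀⟩ := Fin.exists_succAbove_eq hpq
      have hrw := aux_eq_insertNth z q
      rw [hrw, hzq]
      refine B.aux_zero_nested_e c' (fun t h => hnab
        (B.aux_conn_trans (B.aux_conn_trans hma (B.aux_conn_symm h))
          (B.aux_conn_symm (hc' t)))) _ u₀ ?_ ?_ q
      · rw [hu₀]; exact hzp
      · intro u hu
        have h1 : q.succAbove u ≠ p := by
          rw [← hu₀]; exact fun hh => hu (q.succAbove_right_injective hh)
        exact hother _ h1 (Fin.succAbove_ne q u)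
  · rcases hQ with ⟨mb, hmb, hzq⟩ | ⟨c', hc', hzq, hc'V⟩
    · -- nested at p, e at q
      obtain ⟨u₀, hu₀⟩ := Fin.exists_succAbove_eq (Ne.symm hpq)
      have hrw := aux_eq_insertNth z p
      rw [hrw, hzp]
      refine B.aux_zero_nested_e c (fun t h => hnab
        (B.aux_conn_trans (hc t) (B.aux_conn_trans h (B.aux_conn_symm hmb)))) _ u₀ ?_ ?_ p
      · rw [hu₀]; exact hzq
      · intro u hu
        have h1 : p.succAbove u ≠ q := by
          rw [← hu₀]; exact fun hh => hu (p.succAbove_right_injective hh)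
        exact hother _ (Fin.succAbove_ne p u) h1
    · -- nested / nested
      obtain ⟨u₀, hu₀⟩ := Fin.exists_succAbove_eq hpq
      have hrw := aux_eq_insertNth z q
      rw [hrw, hzq]
      refine B.aux_zero_nested_V c c' (fun s t h => hnab
        (B.aux_conn_trans (hc s) (B.aux_conn_trans h (B.aux_conn_symm (hc' t)))))
        _ u₀ ?_ ?_ q
      · rw [hu₀]; exact hzp
      · intro u hu
        have h1 : q.succAbove u ≠ p := by
          rw [← hu₀]; exact fun hh => hu (q.succAbove_right_injective hh)
        exact hother _ h1 (Fin.succAbove_ne q u)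

theorem aux_reduce_q (z : Fin (n + 2) → L) (p q : Fin (n + 2)) (hpq : p ≠ q)
    (hother : ∀ t, t ≠ p → t ≠ q → z t ∈ auxRef B) (a b : I)
    (hnab : ¬ B.Connected a b)
    (hP : (∃ m, B.Connected a m ∧ z p = B.e m) ∨
      (∃ c : Fin (n + 2) → I, (∀ t, B.Connected a (c t)) ∧
        z p = A.bracket (fun t => B.e (c t)) ∧ A.bracket (fun t => B.e (c t)) ∈ B.V))
    (hzq : z q ∈ B.Jcls b) : A.bracket z = 0 := by
  have key : ∀ v : L,
      ((∃ m, B.Connected b m ∧ v = B.e m) ∨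
        (∃ c : Fin (n + 2) → I, (∀ t, B.Connected b (c t)) ∧
          v = A.bracket (fun t => B.e (c t)) ∧ A.bracket (fun t => B.e (c t)) ∈ B.V)) →
      A.bracket (Function.update z q v) = 0 := by
    intro v hv
    refine B.aux_zero_two (Function.update z q v) p q hpq
      (fun t htp htq => by rw [Function.update_of_ne htq]; exact hother t htp htq)
      a b hnab ?_ ?_
    · rw [Function.update_of_ne hpq]
      exact hP
    · rw [Function.update_self]
      exact hv
  have hsplit : z q ∈ B.Vcls b ⊔ B.Wcls b := hzq
  obtain ⟨xb, hxb, yb, hyb, hab⟩ := Submodule.mem_sup.mp hsplit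
  have hz1 : A.bracket (Function.update z q xb) = 0 := by
    have hxb1 := (Submodule.mem_inf.mp hxb).1
    clear hxb hab hsplit hzq
    induction hxb1 using Submodule.span_induction with
    | mem x hx =>
      obtain ⟨c', hc', rfl⟩ := hx
      rcases B.qm1 c' with ⟨j, hj⟩ | hj
      · obtain ⟨lam, hlam⟩ := Submodule.mem_span_singleton.mp hj
        rcases eq_or_ne lam 0 with rfl | hlam0
        · rw [← hlam, zero_smul, MultilinearMap.map_update_zero]
        have hnz : A.bracket (fun t => B.e (c' t)) ≠ 0 := by
          rw [← hlam]; simp [hlam0, B.aux_e_ne_zero j]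
        have haM : ∃ σ, B.aMem σ (fun t => some (c' t)) (some j) := by
          refine ⟨1, ⟨fun t => B.e (c' t), fun t => rfl, hnz⟩, fun z' hz' => ?_, by simp⟩
          rw [show z' = fun t => B.e (c' t) from funext fun t => hz' t]
          exact hj
        have hbj : B.Connected b j :=
          B.aux_conn_trans (hc' 0) (B.aux_conn_target haM (s := 0) rfl)
        rw [← hlam, MultilinearMap.map_update_smul,
          key (B.e j) (Or.inl ⟨j, hbj, rfl⟩), smul_zero]
      · exact key _ (Or.inr ⟨c', hc', rfl, hj⟩)
    | zero => rw [MultilinearMap.map_update_zero]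
    | add x y hx hy hx0 hy0 =>
      rw [MultilinearMap.map_update_add, hx0, hy0, add_zero]
    | smul lam x hx hx0 => rw [MultilinearMap.map_update_smul, hx0, smul_zero]
  have hz2 : A.bracket (Function.update z q yb) = 0 := by
    clear hab hsplit hzq hz1
    induction hyb using Submodule.span_induction with
    | mem x hx =>
      obtain ⟨m, hm, rfl⟩ := hx
      exact key _ (Or.inl ⟨m, hm, rfl⟩)
    | zero => rw [MultilinearMap.map_update_zero]
    | add x y hx hy hx0 hy0 =>
      rw [MultilinearMap.map_update_add, hx0, hy0, add_zero]
    | smul lam x hx hx0 => rw [MultilinearMap.map_update_smul, hx0, smul_zero]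
  have : z = Function.update z q (xb + yb) := by rw [hab, Function.update_eq_self]
  rw [this, MultilinearMap.map_update_add, hz1, hz2, add_zero]

theorem aux_reduce_p (z : Fin (n + 2) → L) (p q : Fin (n + 2)) (hpq : p ≠ q)
    (hother : ∀ t, t ≠ p → t ≠ q → z t ∈ auxRef B) (a b : I)
    (hnab : ¬ B.Connected a b)
    (hzp : z p ∈ B.Jcls a) (hzq : z q ∈ B.Jcls b) : A.bracket z = 0 := by
  have key : ∀ v : L,
      ((∃ m, B.Connected a m ∧ v = B.e m) ∨
        (∃ c : Fin (n + 2) → I, (∀ t, B.Connected a (c t)) ∧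
          v = A.bracket (fun t => B.e (c t)) ∧ A.bracket (fun t => B.e (c t)) ∈ B.V)) →
      A.bracket (Function.update z p v) = 0 := by
    intro v hv
    refine B.aux_reduce_q (Function.update z p v) p q hpq
      (fun t htp htq => by rw [Function.update_of_ne htp]; exact hother t htp htq)
      a b hnab ?_ ?_
    · rw [Function.update_self]
      exact hv
    · rw [Function.update_of_ne (Ne.symm hpq)]
      exact hzq
  have hsplit : z p ∈ B.Vcls a ⊔ B.Wcls a := hzp
  obtain ⟨xa, hxa, ya, hya, hab⟩ := Submodule.mem_sup.mp hsplit
  have hz1 : A.bracket (Function.update z p xa) = 0 := by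
    have hxa1 := (Submodule.mem_inf.mp hxa).1
    clear hxa hab hsplit hzp
    induction hxa1 using Submodule.span_induction with
    | mem x hx =>
      obtain ⟨c', hc', rfl⟩ := hx
      rcases B.qm1 c' with ⟨j, hj⟩ | hj
      · obtain ⟨lam, hlam⟩ := Submodule.mem_span_singleton.mp hj
        rcases eq_or_ne lam 0 with rfl | hlam0
        · rw [← hlam, zero_smul, MultilinearMap.map_update_zero]
        have hnz : A.bracket (fun t => B.e (c' t)) ≠ 0 := by
          rw [← hlam]; simp [hlam0, B.aux_e_ne_zero j]
        have haM : ∃ σ, B.aMem σ (fun t => some (c' t)) (some j) := by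
          refine ⟨1, ⟨fun t => B.e (c' t), fun t => rfl, hnz⟩, fun z' hz' => ?_, by simp⟩
          rw [show z' = fun t => B.e (c' t) from funext fun t => hz' t]
          exact hj
        have haj : B.Connected a j :=
          B.aux_conn_trans (hc' 0) (B.aux_conn_target haM (s := 0) rfl)
        rw [← hlam, MultilinearMap.map_update_smul,
          key (B.e j) (Or.inl ⟨j, haj, rfl⟩), smul_zero]
      · exact key _ (Or.inr ⟨c', hc', rfl, hj⟩)
    | zero => rw [MultilinearMap.map_update_zero]
    | add x y hx hy hx0 hy0 =>
      rw [MultilinearMap.map_update_add, hx0, hy0, add_zero]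
    | smul lam x hx hx0 => rw [MultilinearMap.map_update_smul, hx0, smul_zero]
  have hz2 : A.bracket (Function.update z p ya) = 0 := by
    clear hab hsplit hzp hz1
    induction hya using Submodule.span_induction with
    | mem x hx =>
      obtain ⟨m, hm, rfl⟩ := hx
      exact key _ (Or.inl ⟨m, hm, rfl⟩)
    | zero => rw [MultilinearMap.map_update_zero]
    | add x y hx hy hx0 hy0 =>
      rw [MultilinearMap.map_update_add, hx0, hy0, add_zero]
    | smul lam x hx hx0 => rw [MultilinearMap.map_update_smul, hx0, smul_zero]
  have : z = Function.update z p (xa + ya) := by rw [hab, Function.update_eq_self]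
  rw [this, MultilinearMap.map_update_add, hz1, hz2, add_zero]

/-- mixed-class vanishing with arbitrary further entries. -/
theorem aux_mixed_zero (a b : I) (hnab : ¬ B.Connected a b) (w : Fin (n + 2) → L)
    (p q : Fin (n + 2)) (hpq : p ≠ q) (hp : w p ∈ B.Jcls a) (hq : w q ∈ B.Jcls b) :
    A.bracket w = 0 := by
  classical
  set s : Fin (n + 2) → Set L :=
    fun t => if t = p then {w p} else if t = q then {w q} else auxRef B with hs
  have hm : ∀ t, w t ∈ Submodule.span F (s t) := by
    intro t
    rcases eq_or_ne t p with rfl | htp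
    · rw [hs]; simp only [if_pos rfl]; exact Submodule.subset_span rfl
    rcases eq_or_ne t q with rfl | htq
    · rw [hs]; simp only [if_neg htp, if_pos rfl]; exact Submodule.subset_span rfl
    · rw [hs]; simp only [if_neg htp, if_neg htq]
      rw [aux_ref_span_top]
      exact Submodule.mem_top
  have h1 := aux_multilin_span A.bracket s w hm
  have hle : Submodule.span F {y | ∃ z : Fin (n + 2) → L, (∀ i, z i ∈ s i) ∧
      y = A.bracket z} ≤ ⊥ := by
    refine Submodule.span_le.mpr ?_
    rintro _ ⟨z, hz, rfl⟩
    simp only [SetLike.mem_coe, Submodule.mem_bot]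
    have hzp : z p = w p := by have := hz p; rw [hs] at this; simpa using this
    have hzq : z q = w q := by
      have := hz q; rw [hs] at this; simpa [Ne.symm hpq] using this
    refine B.aux_reduce_p z p q hpq (fun t htp htq => ?_) a b hnab
      (by rw [hzp]; exact hp) (by rw [hzq]; exact hq)
    have := hz t; rw [hs] at this; simpa [htp, htq] using this
  exact (Submodule.mem_bot F).mp (hle h1)

end Aux9
section Aux10

variable {F : Type} [Field F] {G : Type} [AddCommGroup G] [DecidableEq G]
    {L : Type} [AddCommGroup L] [Module F L] {n : ℕ} {I : Type}
    {A : ColorGLT F G L n} (B : QMBasis A I)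

theorem aux_disjoint (hc : A.Centerless) (ht : B.Tight) (i : I) :
    Disjoint (B.Jcls i) (⨆ j ∈ {j : I | ¬ B.Connected i j}, B.Jcls j) := by
  classical
  rw [Submodule.disjoint_def]
  intro x hxi hxT
  refine hc x (fun σ y hy0 => ?_)
  set w : Fin (n + 2) → L := fun t => y (σ t) with hw
  set p₀ : Fin (n + 2) := σ.symm 0 with hp₀
  have hwp : w p₀ = x := by
    rw [hw, hp₀]
    show y (σ (σ.symm 0)) = x
    rw [Equiv.apply_symm_apply]
    exact hy0
  set s : Fin (n + 2) → Set L :=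
    fun t => if t = p₀ then {x} else ⋃ k : I, ((B.Jcls k : Set L)) with hs
  have htop : Submodule.span F (⋃ k : I, ((B.Jcls k : Set L))) = ⊤ := by
    rw [← Submodule.iSup_eq_span]
    exact B.aux_sup_top ht
  have hm : ∀ t, w t ∈ Submodule.span F (s t) := by
    intro t
    rcases eq_or_ne t p₀ with rfl | htp
    · rw [hs]; simp only [if_pos rfl]
      rw [hwp]
      exact Submodule.subset_span rfl
    · rw [hs]; simp only [if_neg htp]
      rw [htop]
      exact Submodule.mem_top
  have h1 := aux_multilin_span A.bracket s w hm
  have hle : Submodule.span F {y' | ∃ z : Fin (n + 2) → L, (∀ t, z t ∈ s t) ∧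
      y' = A.bracket z} ≤ ⊥ := by
    refine Submodule.span_le.mpr ?_
    rintro _ ⟨z, hz, rfl⟩
    simp only [SetLike.mem_coe, Submodule.mem_bot]
    have hzp : z p₀ = x := by have := hz p₀; rw [hs] at this; simpa using this
    obtain ⟨q, hq⟩ := aux_exists_ne p₀
    have hzq : z q ∈ ⋃ k : I, ((B.Jcls k : Set L)) := by
      have := hz q; rw [hs] at this; simpa [hq] using this
    obtain ⟨k_q, hkq⟩ := Set.mem_iUnion.mp hzq
    have hkq : z q ∈ B.Jcls k_q := hkq
    by_cases hcq : B.Connected i k_q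
    · have hxT' : x ∈ ⨆ j, ⨆ _ : ¬ B.Connected i j, B.Jcls j := hxT
      have hz0 : A.bracket (Function.update z p₀ x) = 0 := by
        refine Submodule.iSup_induction (motive := fun v => A.bracket
          (Function.update z p₀ v) = 0) _ hxT' (fun j v hv => ?_) ?_ ?_
        · show A.bracket (Function.update z p₀ v) = 0
          by_cases hj : B.Connected i j
          · have hbot : (⨆ _ : ¬ B.Connected i j, B.Jcls j) = (⊥ : Submodule F L) := by
              simp [hj]
            rw [hbot] at hv
            have hv0 := (Submodule.mem_bot F).mp hv
            subst hv0
            rw [MultilinearMap.map_update_zero]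
          · have hv' : v ∈ B.Jcls j := by rwa [iSup_pos hj] at hv
            have hnjk : ¬ B.Connected j k_q := fun h =>
              hj (B.aux_conn_trans hcq (B.aux_conn_symm h))
            refine B.aux_mixed_zero j k_q hnjk (Function.update z p₀ v) p₀ q
              (Ne.symm hq) ?_ ?_
            · rw [Function.update_self]; exact hv'
            · rw [Function.update_of_ne hq]; exact hkq
        · show A.bracket (Function.update z p₀ 0) = 0
          rw [MultilinearMap.map_update_zero]
        · intro v v' h h'
          show A.bracket (Function.update z p₀ (v + v')) = 0
          rw [MultilinearMap.map_update_add, h, h', add_zero]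
      have hzz : z = Function.update z p₀ x := by rw [← hzp, Function.update_eq_self]
      rw [hzz]
      exact hz0
    · exact B.aux_mixed_zero i k_q hcq z p₀ q (Ne.symm hq) (by rw [hzp]; exact hxi) hkq
  exact (Submodule.mem_bot F).mp (hle h1)

theorem aux_e_step (S : Submodule F L) (hid : A.IsIdeal S) (hmu : B.MuQM)
    {m m' : I} (hm : B.e m ∈ S) {x : I ⊕ I} (hx : x = Sum.inl m ∨ x = Sum.inr m)
    {X : Tup I n} (h : B.muMem (Sum.map some some x) X (some m')) : B.e m' ∈ S := by
  obtain ⟨σ, z, hz, hspan⟩ := hmu (Sum.map some some x) X m' h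
  have hzt : z (σ.symm 0) = B.e m := by
    have h2 := hz (σ.symm 0)
    rw [Equiv.apply_symm_apply] at h2
    rcases hx with rfl | rfl
    · exact h2
    · exact h2
  have hbr : A.bracket z ∈ S := by
    set τ : Equiv.Perm (Fin (n + 2)) := Equiv.swap 0 (σ.symm 0) with hτ
    have hx0 : (fun t => z (τ t)) 0 ∈ S := by
      show z (τ 0) ∈ S
      rw [hτ, Equiv.swap_apply_left, hzt]
      exact hm
    have h3 := hid.2 τ (fun t => z (τ t)) hx0
    have h4 : (fun t => z (τ (τ t))) = z := funext fun t =>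
      congrArg z (Equiv.swap_apply_self _ _ t)
    rwa [h4] at h3
  exact Submodule.span_le.mpr (Set.singleton_subset_iff.mpr hbr) hspan

theorem aux_e_reaches (S : Submodule F L) (hid : A.IsIdeal S) (hmu : B.MuQM)
    {x : I ⊕ I} {m' : I} (h : Reaches B x m') :
    ∀ m, (x = Sum.inl m ∨ x = Sum.inr m) → B.e m ∈ S → B.e m' ∈ S := by
  induction h with
  | single X h =>
    intro m hx hm
    exact B.aux_e_step S hid hmu hm hx h
  | consl X h h2 ih =>
    intro m hx hm
    exact ih _ (Or.inl rfl) (B.aux_e_step S hid hmu hm hx h)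
  | consr X h h2 ih =>
    intro m hx hm
    exact ih _ (Or.inr rfl) (B.aux_e_step S hid hmu hm hx h)

theorem aux_minimal (hmu : B.MuQM) (i : I) (S : Submodule F L) (hle : S ≤ B.Jcls i)
    (hid : A.IsIdeal S) (hib : B.HasInheritedBasis S) : S = B.Jcls i := by
  obtain ⟨V', J', hV'le, ⟨j₀, hj₀⟩, hSeq⟩ := hib
  have hej₀S : B.e j₀ ∈ S := by
    rw [hSeq]
    exact Submodule.mem_sup_right (Submodule.subset_span (Set.mem_image_of_mem _ hj₀))
  have hj₀cls : B.Connected i j₀ := by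
    have h1 : B.e j₀ ∈ B.Vcls i ⊔ B.Wcls i := hle hej₀S
    obtain ⟨av, hav, aw, haw, hsum⟩ := Submodule.mem_sup.mp h1
    have havV : av ∈ B.V := (Submodule.mem_inf.mp hav).2
    have hawW : aw ∈ B.W := by
      rw [← B.e_span]
      exact Submodule.span_mono (Set.image_subset_range _ _) haw
    have heW : B.e j₀ ∈ B.W := by
      rw [← B.e_span]
      exact Submodule.subset_span ⟨j₀, rfl⟩
    have hav0 : av = 0 := by
      have hdiff : av = B.e j₀ - aw := by rw [← hsum]; abel
      refine (Submodule.disjoint_def.mp B.compl.disjoint) av havV ?_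
      rw [hdiff]
      exact Submodule.sub_mem _ heW hawW
    have hewcls : B.e j₀ ∈ Submodule.span F (B.e '' B.cls i) := by
      have : B.e j₀ = aw := by rw [← hsum, hav0, zero_add]
      rw [this]
      exact haw
    by_contra hcon
    exact B.e_indep.notMem_span_image (s := B.cls i) hcon hewcls
  have hWle : B.Wcls i ≤ S := by
    refine Submodule.span_le.mpr ?_
    rintro _ ⟨k, hk, rfl⟩
    simp only [SetLike.mem_coe]
    have hjk : B.Connected j₀ k := B.aux_conn_trans (B.aux_conn_symm hj₀cls) hk
    rw [aux_connected_iff] at hjk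
    rcases hjk with rfl | hre | hre
    · exact hej₀S
    · exact B.aux_e_reaches S hid hmu hre j₀ (Or.inl rfl) hej₀S
    · exact B.aux_e_reaches S hid hmu hre j₀ (Or.inr rfl) hej₀S
  have hVle : B.Vcls i ≤ S := by
    intro x hx
    refine Submodule.span_le.mpr ?_ (Submodule.mem_inf.mp hx).1
    rintro _ ⟨c, hcc, rfl⟩
    simp only [SetLike.mem_coe]
    have h0 : B.e (c 0) ∈ S := hWle (B.aux_e_mem_Wcls (hcc 0))
    exact hid.2 1 (fun t => B.e (c t)) h0
  exact le_antisymm hle (sup_le hVle hWle)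

end Aux10

end QMBasis

theorem stmt12 {F : Type} [Field F] {G : Type} [AddCommGroup G] [DecidableEq G]
    {L : Type} [AddCommGroup L] [Module F L] {n : ℕ} {I : Type}
    {A : ColorGLT F G L n} (B : QMBasis A I) (hmu : B.MuQM) (hc : A.Centerless)
    (ht : B.Tight) :
    (⨆ i : I, B.Jcls i) = ⊤ ∧
    (∀ i : I, Disjoint (B.Jcls i) (⨆ j ∈ {j : I | ¬ B.Connected i j}, B.Jcls j)) ∧
    (∀ i : I, A.IsIdeal (B.Jcls i) ∧ B.HasInheritedBasis (B.Jcls i)) ∧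
    (∀ (i : I) (S : Submodule F L), S ≠ ⊥ → S ≤ B.Jcls i → A.IsIdeal S →
      B.HasInheritedBasis S → S = B.Jcls i) := by
  exact ⟨B.aux_sup_top ht, fun i => B.aux_disjoint hc ht i,
    fun i => ⟨B.aux_Jcls_isIdeal i, B.aux_Jcls_basis i⟩,
    fun i S _ hle hid hib => B.aux_minimal hmu i S hle hid hib⟩
end
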